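/- arXiv:1306.0224 — 4 statements merged into one kernel-verified Lean document; each statement's English description precedes it below -/
import Mathlib

section
/- In the quantum affine space A_q, the q-analogue of elementary symmetric functions e_n = Σ_{i₁<...<i_n} x_{i₁}⋯x_{i_n} and complete symmetric functions h_n = Σ_{i₁≤...≤i_n} x_{i₁}⋯x_{i_n} satisfy the relation Σ_{k=0}^n (-1)^k q^{k(k-1)/2} e_k h_{n-k} = 0 for all n ≥ 1, with h₀ = e₀ = 1. -/
open Finsupp

/-- The bicharacter exponent `θ(a,b) = Σ_{j > i} a_j b_i` for normalizing `x^a x^b` in `A_q`. -/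
def thetaExp (a b : ℕ →₀ ℕ) : ℕ :=
  ∑ j ∈ a.support, ∑ i ∈ b.support, if i < j then a j * b i else 0

variable {R : Type*} [CommRing R]

/-- The quantum affine space `A_q` modelled as functions on normal-form exponent vectors,
with product induced by `x^a · x^b = q^{θ(a,b)} x^{a+b}`. -/
noncomputable def mulW (q : R) (f g : (ℕ →₀ ℕ) → R) : (ℕ →₀ ℕ) → R :=
  fun γ => ∑ p ∈ Finset.HasAntidiagonal.antidiagonal γ, q ^ thetaExp p.1 p.2 * f p.1 * g p.2

/-- The collapse of a weak composition. -/
def collapse (γ : ℕ →₀ ℕ) : List ℕ := (γ.support.sort (· ≤ ·)).map γ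

/-- The `q`-analogue of the complete symmetric function:
`h_n = Σ_{i₁ ≤ … ≤ i_n} x_{i₁} ⋯ x_{i_n}`, i.e. the sum of all monomials of degree `n`. -/
def hW (n : ℕ) : (ℕ →₀ ℕ) → R := fun γ => if (γ.sum fun _ v => v) = n then 1 else 0

/-- The `q`-analogue of the elementary symmetric function:
`e_n = Σ_{i₁ < … < i_n} x_{i₁} ⋯ x_{i_n}`, i.e. the sum of all squarefree monomials of
degree `n`. -/
def eW (n : ℕ) : (ℕ →₀ ℕ) → R := fun γ => if collapse γ = List.replicate n 1 then 1 else 0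

def ind (S : Finset ℕ) : ℕ →₀ ℕ :=
  ⟨S, fun i => if i ∈ S then 1 else 0, fun i => by simp⟩

lemma ind_apply (S : Finset ℕ) (i : ℕ) : ind S i = if i ∈ S then 1 else 0 := rfl
lemma ind_support (S : Finset ℕ) : (ind S).support = S := rfl

lemma sum_eq_card_of_SF {α : ℕ →₀ ℕ} (h : ∀ i ∈ α.support, α i = 1) :
    (α.sum fun _ v => v) = α.support.card := by
  rw [Finsupp.sum, Finset.card_eq_sum_ones]
  exact Finset.sum_congr rfl h

lemma collapse_eq_iff {α : ℕ →₀ ℕ} {k : ℕ} :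
    collapse α = List.replicate k 1 ↔ α.support.card = k ∧ ∀ i ∈ α.support, α i = 1 := by
  rw [collapse, List.eq_replicate_iff]
  simp [Finset.length_sort, Finset.mem_sort]

lemma sum_add' (a b : ℕ →₀ ℕ) :
    ((a + b).sum fun _ v => v) = (a.sum fun _ v => v) + (b.sum fun _ v => v) :=
  Finsupp.sum_add_index' (fun _ => rfl) (fun _ _ _ => rfl)

lemma theta_ind (S : Finset ℕ) (b : ℕ →₀ ℕ) (T : Finset ℕ) (hT : b.support ⊆ T) :
    thetaExp (ind S) b = ∑ j ∈ S, ∑ i ∈ T, if i < j then b i else 0 := by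
  rw [thetaExp, ind_support]
  refine Finset.sum_congr rfl fun j hj => ?_
  rw [ind_apply, if_pos hj]
  simp only [one_mul]
  refine Finset.sum_subset hT fun i _ hi => ?_
  simp [Finsupp.notMem_support_iff.mp hi]

lemma bin_succ (k : ℕ) : (k+1) * ((k+1) - 1) / 2 = k * (k-1) / 2 + k := by
  rw [← Nat.choose_two_right, ← Nat.choose_two_right, Nat.choose_succ_succ]
  simp [Nat.choose_one_right, Nat.add_comm]

lemma exp_eq (γ : ℕ →₀ ℕ) (m : ℕ) (hm : m ∈ γ.support) (hmin : ∀ i ∈ γ.support, m ≤ i)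
    (S : Finset ℕ) (hS : S ⊆ γ.support) (hmS : m ∉ S) :
    (insert m S).card * ((insert m S).card - 1) / 2
      + thetaExp (ind (insert m S)) (γ - ind (insert m S))
    = S.card * (S.card - 1) / 2 + thetaExp (ind S) (γ - ind S) := by
  rw [theta_ind _ _ γ.support Finsupp.support_tsub,
      theta_ind _ _ γ.support Finsupp.support_tsub,
      Finset.sum_insert hmS, Finset.card_insert_of_notMem hmS, bin_succ]
  have hterm0 : (∑ i ∈ γ.support, if i < m then (γ - ind (insert m S)) i else 0) = 0 := by
    refine Finset.sum_eq_zero fun i hi => ?_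
    rw [if_neg (Nat.not_lt.mpr (hmin i hi))]
  have key : ∀ j ∈ S,
      (∑ i ∈ γ.support, if i < j then (γ - ind S) i else 0)
      = (∑ i ∈ γ.support, if i < j then (γ - ind (insert m S)) i else 0) + 1 := by
    intro j hj
    have hmj : m < j := lt_of_le_of_ne (hmin j (hS hj)) (fun h => hmS (h ▸ hj))
    rw [Finset.sum_eq_sum_sdiff_singleton_add hm, Finset.sum_eq_sum_sdiff_singleton_add hm]
    have hrest : ∀ i ∈ γ.support \ {m},
        (if i < j then (γ - ind S) i else 0) = (if i < j then (γ - ind (insert m S)) i else 0) := by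
      intro i hi
      have him : i ≠ m := (Finset.mem_sdiff.mp hi).2 ∘ Finset.mem_singleton.mpr
      congr 1
      rw [Finsupp.tsub_apply, Finsupp.tsub_apply, ind_apply, ind_apply]
      congr 2
      simp [Finset.mem_insert, him]
    rw [Finset.sum_congr rfl hrest, if_pos hmj, if_pos hmj, add_assoc]
    congr 1
    rw [Finsupp.tsub_apply, Finsupp.tsub_apply, ind_apply, ind_apply,
        if_neg hmS, if_pos (Finset.mem_insert_self m S)]
    have : 1 ≤ γ m := Nat.one_le_iff_ne_zero.mpr (Finsupp.mem_support_iff.mp hm)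
    omega
  rw [Finset.sum_congr rfl key, Finset.sum_add_distrib, hterm0, Finset.sum_const,
    smul_eq_mul, mul_one]
  omega

/-- In `A_q`, `Σ_{k=0}^n (-1)^k q^{k(k-1)/2} e_k h_{n-k} = 0` for all `n ≥ 1`
(with `h₀ = e₀ = 1`). -/
theorem eh_relation (q : R) (hq : IsUnit q) (n : ℕ) (hn : 0 < n) (γ : ℕ →₀ ℕ) :
    ∑ k ∈ Finset.range (n + 1),
      (-1 : R) ^ k * q ^ (k * (k - 1) / 2) * mulW q (eW k) (hW (n - k)) γ = 0 := by
  by_cases hγ : (γ.sum fun _ v => v) = n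
  case neg =>
    refine Finset.sum_eq_zero fun k hk => ?_
    have hkn : k ≤ n := Nat.lt_succ_iff.mp (Finset.mem_range.mp hk)
    have hz : mulW q (eW k) (hW (n-k)) γ = 0 := by
      refine Finset.sum_eq_zero fun p hp => ?_
      rcases eq_or_ne (collapse p.1) (List.replicate k 1) with h1 | h1
      · obtain ⟨hc, hsf⟩ := collapse_eq_iff.mp h1
        have hs1 : (p.1.sum fun _ v => v) = k := by rw [sum_eq_card_of_SF hsf, hc]
        have hadd : (p.1.sum fun _ v => v) + (p.2.sum fun _ v => v) = γ.sum fun _ v => v := by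
          rw [← sum_add', (Finset.HasAntidiagonal.mem_antidiagonal.mp hp)]
        have h2 : (p.2.sum fun _ v => v) ≠ n - k := by omega
        simp [hW, h2]
      · simp [eW, h1]
    rw [hz, mul_zero]
  case pos =>
    have hsupp : γ.support.Nonempty := by
      rw [Finset.nonempty_iff_ne_empty]
      intro h
      rw [Finsupp.support_eq_empty] at h
      subst h; simp [Finsupp.sum] at hγ; omega
    set m := γ.support.min' hsupp with hmdef
    have hm : m ∈ γ.support := Finset.min'_mem _ _
    have hmin : ∀ i ∈ γ.support, m ≤ i := fun i hi => Finset.min'_le _ i hi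
    have step1 : (∑ k ∈ Finset.range (n + 1),
        (-1 : R) ^ k * q ^ (k * (k - 1) / 2) * mulW q (eW k) (hW (n - k)) γ)
      = ∑ p ∈ Finset.HasAntidiagonal.antidiagonal γ, ∑ k ∈ Finset.range (n+1),
          (-1 : R) ^ k * q ^ (k * (k - 1) / 2)
            * (q ^ thetaExp p.1 p.2 * eW k p.1 * hW (n-k) p.2) := by
      rw [Finset.sum_comm]
      refine Finset.sum_congr rfl fun k _ => ?_
      simp only [mulW]
      rw [Finset.mul_sum]
    rw [step1]
    have step2 : ∀ p ∈ Finset.HasAntidiagonal.antidiagonal γ,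
        (∑ k ∈ Finset.range (n+1),
          (-1 : R) ^ k * q ^ (k * (k - 1) / 2)
            * (q ^ thetaExp p.1 p.2 * eW k p.1 * hW (n-k) p.2))
        = if ∀ i ∈ p.1.support, p.1 i = 1 then
            (-1 : R) ^ p.1.support.card *
              q ^ (p.1.support.card * (p.1.support.card - 1) / 2 + thetaExp p.1 p.2) else 0 := by
      intro p hp
      have hadd : (p.1.sum fun _ v => v) + (p.2.sum fun _ v => v) = n := by
        rw [← sum_add', (Finset.HasAntidiagonal.mem_antidiagonal.mp hp), hγ]
      by_cases hsf : ∀ i ∈ p.1.support, p.1 i = 1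
      · rw [if_pos hsf]
        set c := p.1.support.card with hc
        have hs1 : (p.1.sum fun _ v => v) = c := sum_eq_card_of_SF hsf
        have hcn : c ≤ n := by omega
        have hzero : ∀ k ∈ Finset.range (n+1), k ≠ c →
            (-1 : R) ^ k * q ^ (k * (k - 1) / 2)
              * (q ^ thetaExp p.1 p.2 * eW k p.1 * hW (n-k) p.2) = 0 := by
          intro k _ hkc
          have he : eW k p.1 = (0 : R) := by
            rw [eW, if_neg]
            intro h
            exact hkc (collapse_eq_iff.mp h).1.symm
          rw [he]; ring
        rw [Finset.sum_eq_single_of_mem c (Finset.mem_range.mpr (Nat.lt_succ_of_le hcn)) hzero]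
        have he : eW c p.1 = (1 : R) := by
          rw [eW, if_pos (collapse_eq_iff.mpr ⟨rfl, hsf⟩)]
        have hh : hW (n - c) p.2 = (1 : R) := by
          rw [hW, if_pos (by omega)]
        rw [he, hh, pow_add]
        ring
      · rw [if_neg hsf]
        refine Finset.sum_eq_zero fun k _ => ?_
        have he : eW k p.1 = (0 : R) := by
          rw [eW, if_neg]
          intro h
          exact hsf (collapse_eq_iff.mp h).2
        rw [he]; ring
    rw [Finset.sum_congr rfl step2, ← Finset.sum_filter]
    have step3 : ∑ p ∈ (Finset.HasAntidiagonal.antidiagonal γ).filter (fun p => ∀ i ∈ p.1.support, p.1 i = 1),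
        ((-1 : R) ^ p.1.support.card *
          q ^ (p.1.support.card * (p.1.support.card - 1) / 2 + thetaExp p.1 p.2))
      = ∑ S ∈ γ.support.powerset,
        ((-1 : R) ^ S.card * q ^ (S.card * (S.card - 1) / 2 + thetaExp (ind S) (γ - ind S))) := by
      refine Finset.sum_nbij' (fun p => p.1.support) (fun S => (ind S, γ - ind S)) ?_ ?_ ?_ ?_ ?_
      · intro p hp
        rw [Finset.mem_filter] at hp
        have hpeq := Finset.HasAntidiagonal.mem_antidiagonal.mp hp.1
        rw [Finset.mem_powerset]
        intro i hi
        rw [Finsupp.mem_support_iff] at hi ⊢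
        rw [← hpeq, Finsupp.add_apply]
        omega
      · intro S hS
        rw [Finset.mem_powerset] at hS
        rw [Finset.mem_filter]
        constructor
        · rw [Finset.HasAntidiagonal.mem_antidiagonal]
          ext i
          rw [Finsupp.add_apply, Finsupp.tsub_apply, ind_apply]
          by_cases hiS : i ∈ S
          · have : 1 ≤ γ i := Nat.one_le_iff_ne_zero.mpr (Finsupp.mem_support_iff.mp (hS hiS))
            rw [if_pos hiS]; omega
          · rw [if_neg hiS]; omega
        · intro i hi
          rw [ind_support] at hi
          rw [ind_apply, if_pos hi]
      · intro p hp
        rw [Finset.mem_filter] at hp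
        have hpeq := Finset.HasAntidiagonal.mem_antidiagonal.mp hp.1
        have h1 : ind p.1.support = p.1 := by
          ext i
          rw [ind_apply]
          by_cases hi : i ∈ p.1.support
          · rw [if_pos hi, hp.2 i hi]
          · rw [if_neg hi, (Finsupp.notMem_support_iff.mp hi)]
        have h2 : γ - ind p.1.support = p.2 := by
          rw [h1]
          ext i
          rw [Finsupp.tsub_apply, ← hpeq, Finsupp.add_apply]
          omega
        exact Prod.ext h1 h2
      · intro S _
        exact ind_support S
      · intro p hp
        rw [Finset.mem_filter] at hp
        have hpeq := Finset.HasAntidiagonal.mem_antidiagonal.mp hp.1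
        have h1 : ind p.1.support = p.1 := by
          ext i
          rw [ind_apply]
          by_cases hi : i ∈ p.1.support
          · rw [if_pos hi, hp.2 i hi]
          · rw [if_neg hi, (Finsupp.notMem_support_iff.mp hi)]
        have h2 : γ - ind p.1.support = p.2 := by
          rw [h1]
          ext i
          rw [Finsupp.tsub_apply, ← hpeq, Finsupp.add_apply]
          omega
        beta_reduce
        rw [h2, h1]
    rw [step3]
    have hpair : ∀ S' ⊆ γ.support, m ∉ S' →
        ((-1 : R) ^ (insert m S').card *
          q ^ ((insert m S').card * ((insert m S').card - 1) / 2
            + thetaExp (ind (insert m S')) (γ - ind (insert m S'))))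
        + ((-1 : R) ^ S'.card *
          q ^ (S'.card * (S'.card - 1) / 2 + thetaExp (ind S') (γ - ind S'))) = 0 := by
      intro S' hS' hmS'
      rw [exp_eq γ m hm hmin S' hS' hmS', Finset.card_insert_of_notMem hmS', pow_succ]
      ring
    refine Finset.sum_involution
      (fun S _ => if m ∈ S then S.erase m else insert m S) ?_ ?_ ?_ ?_
    · intro S hS
      rw [Finset.mem_powerset] at hS
      beta_reduce
      by_cases hmem : m ∈ S
      · rw [if_pos hmem]
        have := hpair (S.erase m) (fun i hi => hS (Finset.erase_subset _ _ hi))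
          (Finset.notMem_erase m S)
        rwa [Finset.insert_erase hmem] at this
      · rw [if_neg hmem, add_comm]
        exact hpair S hS hmem
    · intro S hS _
      beta_reduce
      by_cases hmem : m ∈ S
      · rw [if_pos hmem]
        exact Finset.erase_ne_self.mpr hmem
      · rw [if_neg hmem]
        exact Finset.insert_ne_self.mpr hmem
    · intro S hS
      rw [Finset.mem_powerset] at hS ⊢
      beta_reduce
      by_cases hmem : m ∈ S
      · rw [if_pos hmem]
        exact fun i hi => hS (Finset.erase_subset _ _ hi)
      · rw [if_neg hmem]
        exact Finset.insert_subset hm hS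
    · intro S hS
      beta_reduce
      by_cases hmem : m ∈ S
      · rw [if_pos hmem, if_neg (Finset.notMem_erase m S)]
        exact Finset.insert_erase hmem
      · simp only [if_neg hmem, if_pos (Finset.mem_insert_self m S)]
        exact Finset.erase_insert hmem
end

section
/- The map θ_q : k𝔖 → k𝔖 defined by θ_q(w) = q^{ℓ(w)} w^{-1} satisfies θ_q(w * w') = θ_q(w) *'_q θ_q(w') for all permutations w, w', where * is the Malvenuto–Reutenauer product (sum over all words u v with alph(u) ∪ alph(v) = [p+q], st(u) = w, st(v) = w') and *'_q is the q-shifted-shuffle product w *'_q w' = w ⧢_q \bar{w'}. -/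
/-- A word is a permutation of `[n]` in one-line notation. -/
def isPermWord (w : List ℕ) : Prop := w.Perm ((List.range w.length).map (· + 1))

/-- The standardization `st(w)` of a word: the unique permutation word with the same
relative order, ties broken left-to-right. -/
def stWord (w : List ℕ) : List ℕ :=
  (List.range w.length).map (fun i =>
    1 + ((List.range w.length).filter (fun j =>
      w.getD j 0 < w.getD i 0 ∨ (w.getD j 0 = w.getD i 0 ∧ j < i))).length)

/-- The list of all permutation words of `[n]`. -/
def permsOf (n : ℕ) : List (List ℕ) := ((List.range n).map (· + 1)).permutations

/-- The inversion number `ℓ(w)` of a word. -/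
def invCount (w : List ℕ) : ℕ :=
  (((Finset.range w.length) ×ˢ (Finset.range w.length)).filter
    (fun p => p.1 < p.2 ∧ w.getD p.2 0 < w.getD p.1 0)).card

/-- The inverse permutation word. -/
def invWord (w : List ℕ) : List ℕ := (List.range w.length).map (fun i => w.idxOf (i + 1) + 1)

namespace ThetaAux

lemma getD_map_range (f : ℕ → ℕ) {n i : ℕ} (h : i < n) :
    (((List.range n).map f).getD i 0) = f i := by
  rw [List.getD_eq_getElem _ _ (by simpa using h)]
  simp

lemma getD_take {z : List ℕ} {p j : ℕ} (h : j < p) (h2 : j < z.length) :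
    (z.take p).getD j 0 = z.getD j 0 := by
  rw [List.getD_eq_getElem _ _ (by simp [List.length_take]; omega),
    List.getD_eq_getElem _ _ h2]
  simp [List.getElem_take]

lemma getD_drop {z : List ℕ} {p j : ℕ} (h : p + j < z.length) :
    (z.drop p).getD j 0 = z.getD (p + j) 0 := by
  rw [List.getD_eq_getElem _ _ (by simp [List.length_drop]; omega),
    List.getD_eq_getElem _ _ h]
  simp

lemma countP_range_eq_card (P : ℕ → Prop) [DecidablePred P] (n : ℕ) :
    (List.range n).countP (fun i => decide (P i)) = ((Finset.range n).filter P).card := by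
  induction n with
  | zero => simp
  | succ n ih =>
      rw [List.range_succ, List.countP_append, Finset.range_add_one, Finset.filter_insert]
      by_cases h : P n
      · rw [if_pos h, Finset.card_insert_of_notMem (by simp)]
        simp [h, ih]
      · rw [if_neg h]
        simp [h, ih]

lemma length_filter_eq_sum (P : ℕ → Prop) [DecidablePred P] (t : List ℕ) :
    (t.filter (fun c => decide (P c))).length
      = ∑ j ∈ Finset.range t.length, if P (t.getD j 0) then 1 else 0 := by
  induction t with
  | nil => simp
  | cons c t ih =>
      rw [List.length_cons, Finset.sum_range_succ']
      simp only [List.getD_cons_succ, List.getD_cons_zero]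
      rw [List.filter_cons]
      by_cases h : P c
      · simp [h, ih, Nat.add_comm]
      · simp [h, ih]

lemma indexOf_map_of_injOn {f : ℕ → ℕ} : ∀ {l : List ℕ},
    (∀ x ∈ l, ∀ y ∈ l, f x = f y → x = y) → ∀ {a}, a ∈ l →
    (l.map f).idxOf (f a) = l.idxOf a := by
  intro l
  induction l with
  | nil => simp
  | cons b t ih =>
      intro hf a ha
      rw [List.map_cons]
      by_cases hab : a = b
      · subst hab; simp
      · have h1 : f a ≠ f b := fun h => hab (hf a ha b (by simp) h)
        have ha' : a ∈ t := by
          rcases List.mem_cons.mp ha with h | h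
          · exact absurd h hab
          · exact h
        rw [List.idxOf_cons_ne _ h1.symm, List.idxOf_cons_ne _ (Ne.symm hab),
          ih (fun x hx y hy => hf x (by simp [hx]) y (by simp [hy])) ha']

lemma indexOf_sorted : ∀ {l : List ℕ}, l.Pairwise (· < ·) → ∀ {a}, a ∈ l →
    l.idxOf a = l.countP (fun b => decide (b < a)) := by
  intro l
  induction l with
  | nil => simp
  | cons b t ih =>
      intro hl a ha
      rw [List.pairwise_cons] at hl
      by_cases hab : a = b
      · subst hab
        rw [List.idxOf_cons_self, List.countP_cons]
        have : t.countP (fun b_1 => decide (b_1 < a)) = 0 :=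
          List.countP_eq_zero.mpr (fun x hx => by
            simp only [decide_eq_true_eq]; exact fun h => absurd (hl.1 x hx) (by omega))
        simp [this]
      · have ha' : a ∈ t := by
          rcases List.mem_cons.mp ha with h | h
          · exact absurd h hab
          · exact h
        rw [List.idxOf_cons_ne _ (Ne.symm hab), List.countP_cons, ih hl.2 ha']
        have : b < a := hl.1 a ha'
        simp [this, Nat.succ_eq_add_one]


/-- crossing count with respect to threshold `p`. -/
def crossNum (p : ℕ) : List ℕ → ℕ
  | [] => 0
  | c :: t => (if c ≤ p then 0 else (t.filter (fun e => e ≤ p)).length) + crossNum p t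

lemma crossNum_nil (p : ℕ) : crossNum p [] = 0 := rfl

lemma crossNum_cons (p c : ℕ) (t : List ℕ) :
    crossNum p (c :: t) = (if c ≤ p then 0 else (t.filter (fun e => e ≤ p)).length) + crossNum p t := rfl

lemma crossNum_of_all_gt {p : ℕ} {y : List ℕ} (h : ∀ c ∈ y, p < c) : crossNum p y = 0 := by
  induction y with
  | nil => rfl
  | cons c t ih =>
      rw [crossNum_cons, if_neg (by have := h c (by simp); omega),
        List.filter_eq_nil_iff.mpr (fun a ha => by have := h a (by simp [ha]); simp; omega),
        ih (fun c hc => h c (by simp [hc]))]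
      simp

lemma crossNum_of_all_le {p : ℕ} {y : List ℕ} (h : ∀ c ∈ y, c ≤ p) : crossNum p y = 0 := by
  induction y with
  | nil => rfl
  | cons c t ih =>
      rw [crossNum_cons, if_pos (h c (by simp)), ih (fun c hc => h c (by simp [hc]))]

lemma crossNum_eq_sum (p : ℕ) (y : List ℕ) :
    crossNum p y = ∑ s ∈ Finset.range y.length, ∑ t ∈ Finset.range y.length,
      if s < t ∧ p < y.getD s 0 ∧ y.getD t 0 ≤ p then 1 else 0 := by
  induction y with
  | nil => simp [crossNum_nil]
  | cons c t ih =>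
      rw [crossNum_cons, List.length_cons, Finset.sum_range_succ']
      have h0 : (∑ j ∈ Finset.range (t.length + 1),
          if 0 < j ∧ p < (c :: t).getD 0 0 ∧ (c :: t).getD j 0 ≤ p then 1 else 0)
          = if c ≤ p then 0 else (t.filter (fun e => e ≤ p)).length := by
        rw [Finset.sum_range_succ']
        simp only [List.getD_cons_succ, List.getD_cons_zero, Nat.lt_irrefl, false_and,
          if_false, add_zero, Nat.succ_pos, true_and]
        by_cases h : c ≤ p
        · rw [if_pos h]
          apply Finset.sum_eq_zero
          intro j _
          rw [if_neg (by omega)]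
        · rw [if_neg h, length_filter_eq_sum (fun e => e ≤ p)]
          apply Finset.sum_congr rfl
          intro j _
          congr 1
          simp only [eq_iff_iff]
          omega
      have h1 : ∀ i, (∑ j ∈ Finset.range (t.length + 1),
          if i + 1 < j ∧ p < (c :: t).getD (i+1) 0 ∧ (c :: t).getD j 0 ≤ p then 1 else 0)
          = ∑ j ∈ Finset.range t.length,
            if i < j ∧ p < t.getD i 0 ∧ t.getD j 0 ≤ p then 1 else 0 := by
        intro i
        rw [Finset.sum_range_succ']
        simp only [List.getD_cons_succ, List.getD_cons_zero]
        rw [if_neg (by omega), add_zero]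
        apply Finset.sum_congr rfl
        intro j _
        congr 1
        simp only [eq_iff_iff]
        omega
      rw [ih, h0, Finset.sum_congr rfl (fun i _ => h1 i)]
      omega

lemma invCount_eq_sum (z : List ℕ) :
    invCount z = ∑ i ∈ Finset.range z.length, ∑ j ∈ Finset.range z.length,
      if i < j ∧ z.getD j 0 < z.getD i 0 then 1 else 0 := by
  rw [invCount, Finset.card_filter, Finset.sum_product]


lemma permword_nodup {z : List ℕ} (h : isPermWord z) : z.Nodup := by
  rw [isPermWord] at h
  exact h.nodup_iff.mpr (List.nodup_range.map (fun a b hab => by omega))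

lemma permword_mem_iff {z : List ℕ} (h : isPermWord z) {m : ℕ} :
    m ∈ z ↔ 1 ≤ m ∧ m ≤ z.length := by
  rw [isPermWord] at h
  rw [h.mem_iff]
  simp only [List.mem_map, List.mem_range]
  constructor
  · rintro ⟨i, hi, rfl⟩; omega
  · rintro ⟨h1, h2⟩; exact ⟨m - 1, by omega, by omega⟩

lemma permword_getD_mem {z : List ℕ} {i : ℕ} (hi : i < z.length) : z.getD i 0 ∈ z := by
  rw [List.getD_eq_getElem _ _ hi]
  exact List.getElem_mem _

lemma permword_getD_bounds {z : List ℕ} (h : isPermWord z) {i : ℕ} (hi : i < z.length) :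
    1 ≤ z.getD i 0 ∧ z.getD i 0 ≤ z.length :=
  (permword_mem_iff h).mp (permword_getD_mem hi)

lemma isPermWord_of {z : List ℕ} (hnd : z.Nodup) (hb : ∀ m ∈ z, 1 ≤ m ∧ m ≤ z.length) :
    isPermWord z := by
  rw [isPermWord]
  have hsub : z ⊆ (List.range z.length).map (· + 1) := by
    intro m hm
    simp only [List.mem_map, List.mem_range]
    exact ⟨m - 1, by have := hb m hm; omega, by have := hb m hm; omega⟩
  exact (hnd.subperm hsub).perm_of_length_le (by simp)

lemma permword_indexOf_getD {z : List ℕ} (h : isPermWord z) {i : ℕ} (hi : i < z.length) :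
    z.idxOf (z.getD i 0) = i := by
  rw [List.getD_eq_getElem _ _ hi]
  exact List.Nodup.idxOf_getElem (permword_nodup h) i hi

lemma permword_indexOf_lt {z : List ℕ} (h : isPermWord z) {m : ℕ} (hm : m ∈ z) :
    z.idxOf m < z.length := List.idxOf_lt_length_iff.mpr hm

lemma permword_getD_indexOf {z : List ℕ} {m : ℕ} (hm : m ∈ z) :
    z.getD (z.idxOf m) 0 = m := by
  rw [List.getD_eq_getElem _ _ (List.idxOf_lt_length_iff.mpr hm)]
  exact List.getElem_idxOf _

lemma invWord_length (z : List ℕ) : (invWord z).length = z.length := by simp [invWord]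

lemma invWord_getD {z : List ℕ} {i : ℕ} (hi : i < z.length) :
    (invWord z).getD i 0 = z.idxOf (i + 1) + 1 := by
  rw [invWord, getD_map_range _ hi]

lemma invWord_mem_ge {z : List ℕ} {e : ℕ} (he : e ∈ invWord z) : 1 ≤ e := by
  rw [invWord] at he
  simp only [List.mem_map, List.mem_range] at he
  obtain ⟨i, _, rfl⟩ := he
  omega

lemma invWord_mem_le {z : List ℕ} (h : isPermWord z) {e : ℕ} (he : e ∈ invWord z) :
    e ≤ z.length := by
  rw [invWord] at he
  simp only [List.mem_map, List.mem_range] at he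
  obtain ⟨i, hi, rfl⟩ := he
  have : i + 1 ∈ z := (permword_mem_iff h).mpr ⟨by omega, by omega⟩
  have := permword_indexOf_lt h this
  omega

lemma invWord_isPerm {z : List ℕ} (h : isPermWord z) : isPermWord (invWord z) := by
  apply isPermWord_of
  · rw [invWord]
    apply (List.nodup_range.map_on ?_)
    intro x hx y hy hxy
    simp only [List.mem_range] at hx hy
    have hx1 : x + 1 ∈ z := (permword_mem_iff h).mpr ⟨by omega, by omega⟩
    have hy1 : y + 1 ∈ z := (permword_mem_iff h).mpr ⟨by omega, by omega⟩
    have : z.getD (z.idxOf (x+1)) 0 = z.getD (z.idxOf (y+1)) 0 := by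
      rw [show z.idxOf (x+1) = z.idxOf (y+1) from by omega]
    rw [permword_getD_indexOf hx1, permword_getD_indexOf hy1] at this
    omega
  · intro m hm
    rw [invWord_length]
    exact ⟨invWord_mem_ge hm, invWord_mem_le h hm⟩

lemma invWord_invWord {z : List ℕ} (h : isPermWord z) : invWord (invWord z) = z := by
  have hlen : (invWord (invWord z)).length = z.length := by rw [invWord_length, invWord_length]
  apply List.ext_getElem hlen
  intro i h1 h2
  rw [← List.getD_eq_getElem (invWord (invWord z)) 0 h1, ← List.getD_eq_getElem z 0 h2]
  have hi : i < z.length := h2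
  rw [invWord_getD (by rw [invWord_length]; exact hi)]
  -- compute (invWord z).idxOf (i + 1)
  have hm := permword_getD_bounds h hi
  set m := z.getD i 0 with hm_def
  have hm1 : m - 1 < z.length := by omega
  have hf : z.idxOf (m - 1 + 1) + 1 = i + 1 := by
    rw [show m - 1 + 1 = m from by omega, hm_def, permword_indexOf_getD h hi]
  have hinj : ∀ x ∈ List.range z.length, ∀ y ∈ List.range z.length,
      z.idxOf (x + 1) + 1 = z.idxOf (y + 1) + 1 → x = y := by
    intro x hx y hy hxy
    simp only [List.mem_range] at hx hy
    have hx1 : x + 1 ∈ z := (permword_mem_iff h).mpr ⟨by omega, by omega⟩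
    have hy1 : y + 1 ∈ z := (permword_mem_iff h).mpr ⟨by omega, by omega⟩
    have : z.getD (z.idxOf (x+1)) 0 = z.getD (z.idxOf (y+1)) 0 := by
      rw [show z.idxOf (x+1) = z.idxOf (y+1) from by omega]
    rw [permword_getD_indexOf hx1, permword_getD_indexOf hy1] at this
    omega
  have : (invWord z).idxOf (i + 1) = m - 1 := by
    rw [invWord, ← hf]
    rw [indexOf_map_of_injOn hinj (by simp only [List.mem_range]; exact hm1)]
    have h5 := List.Nodup.idxOf_getElem (List.nodup_range (n := z.length)) (m-1) (by simpa using hm1)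
    simpa using h5
  rw [this]
  omega

lemma stWord_length (v : List ℕ) : (stWord v).length = v.length := by simp [stWord]

lemma stWord_getD {v : List ℕ} (hv : v.Nodup) {i : ℕ} (hi : i < v.length) :
    (stWord v).getD i 0
      = 1 + ((List.range v.length).filter (fun j => decide (v.getD j 0 < v.getD i 0))).length := by
  rw [stWord, getD_map_range _ hi]
  congr 2
  apply List.filter_congr
  intro j hj
  simp only [List.mem_range] at hj
  simp only [decide_eq_decide]
  constructor
  · rintro (hlt | ⟨heq, hji⟩)
    · exact hlt
    · exfalso
      have : v.getD j 0 = v.getD i 0 := heq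
      rw [List.getD_eq_getElem _ _ hj, List.getD_eq_getElem _ _ hi] at this
      have := List.Nodup.idxOf_getElem hv j hj ▸ List.Nodup.idxOf_getElem hv i hi ▸ congrArg v.idxOf this
      omega
  · exact fun hlt => Or.inl hlt

lemma st_lt_iff {v : List ℕ} (hv : v.Nodup) {i j : ℕ} (hi : i < v.length) (hj : j < v.length) :
    ((stWord v).getD j 0 < (stWord v).getD i 0) ↔ v.getD j 0 < v.getD i 0 := by
  rw [stWord_getD hv hi, stWord_getD hv hj]
  have key : ∀ {a b : ℕ}, a < v.length → b < v.length → v.getD a 0 < v.getD b 0 →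
      ((List.range v.length).filter (fun k => decide (v.getD k 0 < v.getD a 0))).length
        < ((List.range v.length).filter (fun k => decide (v.getD k 0 < v.getD b 0))).length := by
    intro a b ha hb hab
    rw [← List.countP_eq_length_filter, ← List.countP_eq_length_filter,
      countP_range_eq_card (fun k => v.getD k 0 < v.getD a 0),
      countP_range_eq_card (fun k => v.getD k 0 < v.getD b 0)]
    apply Finset.card_lt_card
    rw [Finset.ssubset_iff_of_subset]
    · refine ⟨a, ?_, ?_⟩
      · simp only [Finset.mem_filter, Finset.mem_range]
        exact ⟨ha, hab⟩
      · simp only [Finset.mem_filter, Finset.mem_range, not_and]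
        intro _
        omega
    · intro k hk
      simp only [Finset.mem_filter, Finset.mem_range] at hk ⊢
      exact ⟨hk.1, by omega⟩
  constructor
  · intro hlt
    rcases Nat.lt_trichotomy (v.getD j 0) (v.getD i 0) with h' | h' | h'
    · exact h'
    · exfalso
      have hji : j = i := by
        rw [List.getD_eq_getElem _ _ hj, List.getD_eq_getElem _ _ hi] at h'
        have := List.Nodup.idxOf_getElem hv j hj ▸ List.Nodup.idxOf_getElem hv i hi ▸
          congrArg v.idxOf h'
        omega
      subst hji
      omega
    · have := key hi hj h'
      omega
  · intro h'
    have := key hj hi h'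
    omega

lemma invCount_stWord {v : List ℕ} (hv : v.Nodup) : invCount (stWord v) = invCount v := by
  rw [invCount, invCount, stWord_length]
  congr 1
  apply Finset.filter_congr
  intro x hx
  simp only [Finset.mem_product, Finset.mem_range] at hx
  exact and_congr Iff.rfl (st_lt_iff hv hx.1 hx.2)


lemma indexOf_succ_injOn {z : List ℕ} (h : isPermWord z) :
    ∀ x ∈ List.range z.length, ∀ y ∈ List.range z.length,
      z.idxOf (x + 1) + 1 = z.idxOf (y + 1) + 1 → x = y := by
  intro x hx y hy hxy
  simp only [List.mem_range] at hx hy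
  have hx1 : x + 1 ∈ z := (permword_mem_iff h).mpr ⟨by omega, by omega⟩
  have hy1 : y + 1 ∈ z := (permword_mem_iff h).mpr ⟨by omega, by omega⟩
  have : z.getD (z.idxOf (x+1)) 0 = z.getD (z.idxOf (y+1)) 0 := by
    rw [show z.idxOf (x+1) = z.idxOf (y+1) from by omega]
  rw [permword_getD_indexOf hx1, permword_getD_indexOf hy1] at this
  omega

lemma slice_lemma {z : List ℕ} (hz : isPermWord z) (a k : ℕ) (hak : a + k ≤ z.length) :
    isPermWord (((invWord z).filter (fun e => a < e ∧ e ≤ a + k)).map (fun e => e - a)) ∧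
    invWord (((invWord z).filter (fun e => a < e ∧ e ≤ a + k)).map (fun e => e - a))
      = stWord ((z.drop a).take k) := by
  have hnd := permword_nodup hz
  set L := (invWord z).filter (fun e => decide (a < e ∧ e ≤ a + k)) with hLdef
  set M := L.map (fun e => e - a) with hMdef
  set s := (z.drop a).take k with hsdef
  have hs_len : s.length = k := by
    rw [hsdef, List.length_take, List.length_drop]; omega
  have hs_getD : ∀ j, j < k → s.getD j 0 = z.getD (a + j) 0 := by
    intro j hj
    rw [hsdef, getD_take hj (by rw [List.length_drop]; omega), getD_drop (by omega)]
  have hs_nodup : s.Nodup := ((List.take_sublist _ _).trans (List.drop_sublist _ _)).nodup hnd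
  have hL_mem : ∀ e ∈ L, e ∈ invWord z ∧ a < e ∧ e ≤ a + k := by
    intro e he
    rw [hLdef, List.mem_filter] at he
    simpa using he
  have hL_nodup : L.Nodup := List.filter_sublist.nodup (permword_nodup (invWord_isPerm hz))
  have hM_len : M.length = k := by
    rw [hMdef, List.length_map, hLdef, ← List.countP_eq_length_filter]
    have hperm : List.Perm (invWord z) ((List.range z.length).map (· + 1)) := by
      have h2 := invWord_isPerm hz
      rw [isPermWord, invWord_length] at h2
      exact h2
    rw [hperm.countP_eq, List.countP_map]
    have hc : ((fun e => decide (a < e ∧ e ≤ a + k)) ∘ (· + 1))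
        = fun j => decide (a < j + 1 ∧ j + 1 ≤ a + k) := rfl
    rw [hc, countP_range_eq_card (fun j => a < j + 1 ∧ j + 1 ≤ a + k)]
    have hIco : (Finset.range z.length).filter (fun j => a < j + 1 ∧ j + 1 ≤ a + k)
        = Finset.Ico a (a + k) := by
      ext j
      simp only [Finset.mem_filter, Finset.mem_range, Finset.mem_Ico]
      omega
    rw [hIco, Nat.card_Ico]
    omega
  have hM_nodup : M.Nodup := by
    rw [hMdef]
    apply hL_nodup.map_on
    intro x hx y hy hxy
    have hx' := (hL_mem x hx).2
    have hy' := (hL_mem y hy).2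
    omega
  have hM_perm : isPermWord M := by
    apply isPermWord_of hM_nodup
    intro m hm
    rw [hM_len]
    rw [hMdef] at hm
    simp only [List.mem_map] at hm
    obtain ⟨e, he, rfl⟩ := hm
    have := (hL_mem e he).2
    omega
  refine ⟨hM_perm, ?_⟩
  have hlen2 : (invWord M).length = (stWord s).length := by
    rw [invWord_length, stWord_length, hM_len, hs_len]
  apply List.ext_getElem hlen2
  intro i h1 h2
  have hik : i < k := by rw [invWord_length, hM_len] at h1; exact h1
  rw [← List.getD_eq_getElem (invWord M) 0 h1, ← List.getD_eq_getElem (stWord s) 0 h2]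
  rw [invWord_getD (by rw [hM_len]; exact hik)]
  rw [stWord_getD hs_nodup (by rw [hs_len]; exact hik)]
  -- the value sitting at slice position i
  have hai : a + i < z.length := by omega
  have hmb := permword_getD_bounds hz hai
  set m := z.getD (a + i) 0 with hmdef
  have hidx : z.idxOf m = a + i := permword_indexOf_getD hz hai
  have hsi : s.getD i 0 = m := by rw [hs_getD i hik]
  have hm11 : m - 1 + 1 = m := by omega
  have hm1n : m - 1 < z.length := by omega
  set Lp := (List.range z.length).filter
    (fun j => decide (a < z.idxOf (j+1) + 1 ∧ z.idxOf (j+1) + 1 ≤ a + k)) with hLpdef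
  have hLp : L = Lp.map (fun j => z.idxOf (j+1) + 1) := by
    rw [hLdef, invWord, List.filter_map]
    rfl
  have hmLp : m - 1 ∈ Lp := by
    rw [hLpdef, List.mem_filter]
    refine ⟨by simp only [List.mem_range]; omega, ?_⟩
    rw [hm11, hidx]
    simp only [decide_eq_true_eq]
    omega
  have hinjLp : ∀ x ∈ Lp, ∀ y ∈ Lp,
      z.idxOf (x+1) + 1 = z.idxOf (y+1) + 1 → x = y := by
    intro x hx y hy
    rw [hLpdef, List.mem_filter] at hx hy
    exact indexOf_succ_injOn hz x hx.1 y hy.1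
  have hmemL : a + i + 1 ∈ L := by
    rw [hLp]
    refine List.mem_map.mpr ⟨m - 1, hmLp, ?_⟩
    rw [hm11, hidx]
  have hstep1 : M.idxOf (i + 1) = L.idxOf (a + i + 1) := by
    have hinjL : ∀ x ∈ L, ∀ y ∈ L, x - a = y - a → x = y := by
      intro x hx y hy hxy
      have hx' := (hL_mem x hx).2
      have hy' := (hL_mem y hy).2
      omega
    have h5 := indexOf_map_of_injOn (f := fun e => e - a) hinjL hmemL
    rw [hMdef]
    have hred : a + i + 1 - a = i + 1 := by omega
    rw [← hred]
    simpa using h5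
  have hstep2 : L.idxOf (a + i + 1) = Lp.idxOf (m - 1) := by
    have h5 := indexOf_map_of_injOn (f := fun j => z.idxOf (j+1) + 1) hinjLp hmLp
    rw [hLp]
    simp only [hm11, hidx] at h5
    exact h5
  have hstep3 : Lp.idxOf (m - 1) = Lp.countP (fun b => decide (b < m - 1)) :=
    indexOf_sorted (List.Pairwise.sublist List.filter_sublist List.pairwise_lt_range) hmLp
  have hstep4 : Lp.countP (fun b => decide (b < m - 1))
      = ((Finset.range z.length).filter
          (fun j => j < m - 1 ∧ a ≤ z.idxOf (j+1) ∧ z.idxOf (j+1) < a + k)).card := by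
    rw [hLpdef, List.countP_filter]
    have hc : (fun b => decide (b < m-1) &&
          decide (a < z.idxOf (b+1) + 1 ∧ z.idxOf (b+1) + 1 ≤ a + k))
        = fun j => decide (j < m - 1 ∧ a ≤ z.idxOf (j+1) ∧ z.idxOf (j+1) < a + k) := by
      funext j
      rw [← Bool.decide_and]
      simp only [decide_eq_decide]
      omega
    rw [hc, countP_range_eq_card
      (fun j => j < m - 1 ∧ a ≤ z.idxOf (j+1) ∧ z.idxOf (j+1) < a + k)]
  have hstep5 : ((List.range s.length).filter (fun j => decide (s.getD j 0 < s.getD i 0))).length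
      = ((Finset.range k).filter (fun j => s.getD j 0 < m)).card := by
    simp only [hsi, hs_len]
    rw [← List.countP_eq_length_filter, countP_range_eq_card (fun j => s.getD j 0 < m)]
  have hbij : ((Finset.range z.length).filter
        (fun j => j < m - 1 ∧ a ≤ z.idxOf (j+1) ∧ z.idxOf (j+1) < a + k)).card
      = ((Finset.range k).filter (fun j => s.getD j 0 < m)).card := by
    refine Finset.card_bij' (fun j _ => z.idxOf (j+1) - a) (fun j _ => z.getD (a+j) 0 - 1)
      ?hi ?hj ?left ?right
    case hi =>
      intro j hj
      simp only [Finset.mem_filter, Finset.mem_range] at hj ⊢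
      obtain ⟨hjn, hjm, hge, hlt⟩ := hj
      have hj1 : j + 1 ∈ z := (permword_mem_iff hz).mpr ⟨by omega, by omega⟩
      have hval : z.getD (z.idxOf (j+1)) 0 = j + 1 := permword_getD_indexOf hj1
      refine ⟨by omega, ?_⟩
      rw [hs_getD _ (by omega), show a + (z.idxOf (j+1) - a) = z.idxOf (j+1) from by omega,
        hval]
      omega
    case hj =>
      intro j hj
      simp only [Finset.mem_filter, Finset.mem_range] at hj ⊢
      obtain ⟨hjk, hlt⟩ := hj
      rw [hs_getD _ hjk] at hlt
      have hb := permword_getD_bounds hz (show a + j < z.length from by omega)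
      have hval : z.idxOf (z.getD (a+j) 0) = a + j :=
        permword_indexOf_getD hz (show a + j < z.length from by omega)
      have hiv : z.idxOf (z.getD (a+j) 0 - 1 + 1) = a + j := by
        rw [show z.getD (a+j) 0 - 1 + 1 = z.getD (a+j) 0 from by omega, hval]
      refine ⟨by omega, by omega, ?_, ?_⟩ <;> rw [hiv] <;> omega
    case left =>
      intro j hj
      simp only [Finset.mem_filter, Finset.mem_range] at hj
      obtain ⟨hjn, hjm, hge, hlt⟩ := hj
      have hj1 : j + 1 ∈ z := (permword_mem_iff hz).mpr ⟨by omega, by omega⟩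
      have hval : z.getD (z.idxOf (j+1)) 0 = j + 1 := permword_getD_indexOf hj1
      show z.getD (a + (z.idxOf (j+1) - a)) 0 - 1 = j
      rw [show a + (z.idxOf (j+1) - a) = z.idxOf (j+1) from by omega, hval]
      omega
    case right =>
      intro j hj
      simp only [Finset.mem_filter, Finset.mem_range] at hj
      obtain ⟨hjk, hlt⟩ := hj
      have hb := permword_getD_bounds hz (show a + j < z.length from by omega)
      have hval : z.idxOf (z.getD (a+j) 0) = a + j :=
        permword_indexOf_getD hz (show a + j < z.length from by omega)
      show z.idxOf (z.getD (a+j) 0 - 1 + 1) - a = j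
      rw [show z.getD (a+j) 0 - 1 + 1 = z.getD (a+j) 0 from by omega, hval]
      omega
  rw [hstep1, hstep2, hstep3, hstep4, hstep5, hbij]
  omega


lemma sum_sum_ite (A B : Finset ℕ) (P : ℕ → ℕ → Prop) [∀ i j, Decidable (P i j)] :
    (∑ i ∈ A, ∑ j ∈ B, if P i j then (1:ℕ) else 0)
      = ((A ×ˢ B).filter (fun x => P x.1 x.2)).card := by
  rw [Finset.card_filter, Finset.sum_product]

lemma invCount_split {z : List ℕ} (hz : isPermWord z) {p : ℕ} (hp : p ≤ z.length) :
    invCount z = invCount (z.take p) + invCount (z.drop p) + crossNum p (invWord z) := by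
  rw [invCount_eq_sum]
  have hsplit : ∀ f : ℕ → ℕ, (∑ i ∈ Finset.range z.length, f i)
      = (∑ i ∈ Finset.range p, f i) + ∑ i ∈ Finset.Ico p z.length, f i := by
    intro f
    rw [Finset.range_eq_Ico, ← Finset.sum_Ico_consecutive f (Nat.zero_le p) hp, ← Finset.range_eq_Ico]
  rw [hsplit]
  rw [Finset.sum_congr rfl (fun i (_ : i ∈ Finset.range p) => hsplit
    (fun j => if i < j ∧ z.getD j 0 < z.getD i 0 then 1 else 0)),
    Finset.sum_congr rfl (fun i (_ : i ∈ Finset.Ico p z.length) => hsplit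
    (fun j => if i < j ∧ z.getD j 0 < z.getD i 0 then 1 else 0)),
    Finset.sum_add_distrib, Finset.sum_add_distrib]
  have hS11 : (∑ i ∈ Finset.range p, ∑ j ∈ Finset.range p,
      if i < j ∧ z.getD j 0 < z.getD i 0 then 1 else 0) = invCount (z.take p) := by
    rw [invCount_eq_sum, List.length_take, min_eq_left hp]
    apply Finset.sum_congr rfl
    intro i hi
    apply Finset.sum_congr rfl
    intro j hj
    simp only [Finset.mem_range] at hi hj
    rw [getD_take hi (by omega), getD_take hj (by omega)]
  have hS21 : (∑ i ∈ Finset.Ico p z.length, ∑ j ∈ Finset.range p,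
      if i < j ∧ z.getD j 0 < z.getD i 0 then 1 else 0) = 0 := by
    apply Finset.sum_eq_zero
    intro i hi
    apply Finset.sum_eq_zero
    intro j hj
    simp only [Finset.mem_Ico] at hi
    simp only [Finset.mem_range] at hj
    rw [if_neg (by omega)]
  have hS22 : (∑ i ∈ Finset.Ico p z.length, ∑ j ∈ Finset.Ico p z.length,
      if i < j ∧ z.getD j 0 < z.getD i 0 then 1 else 0) = invCount (z.drop p) := by
    rw [invCount_eq_sum, List.length_drop]
    rw [Finset.sum_Ico_eq_sum_range]
    apply Finset.sum_congr rfl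
    intro i hi
    rw [Finset.sum_Ico_eq_sum_range]
    apply Finset.sum_congr rfl
    intro j hj
    simp only [Finset.mem_range] at hi hj
    rw [getD_drop (show p + i < z.length from by omega),
      getD_drop (show p + j < z.length from by omega)]
    congr 1
    simp only [eq_iff_iff]
    omega
  have hS12 : (∑ i ∈ Finset.range p, ∑ j ∈ Finset.Ico p z.length,
      if i < j ∧ z.getD j 0 < z.getD i 0 then 1 else 0) = crossNum p (invWord z) := by
    rw [crossNum_eq_sum, invWord_length]
    have hA := sum_sum_ite (Finset.range p) (Finset.Ico p z.length)
      (fun i j => i < j ∧ z.getD j 0 < z.getD i 0)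
    have hB := sum_sum_ite (Finset.range z.length) (Finset.range z.length)
      (fun s t => s < t ∧ p < (invWord z).getD s 0 ∧ (invWord z).getD t 0 ≤ p)
    rw [hA, hB]
    refine Finset.card_bij' (fun x _ => (z.getD x.2 0 - 1, z.getD x.1 0 - 1))
      (fun x _ => (z.idxOf (x.2 + 1), z.idxOf (x.1 + 1))) ?hi ?hj ?left ?right
    case hi =>
      rintro ⟨i, j⟩ hx
      simp only [Finset.mem_filter, Finset.mem_product, Finset.mem_range, Finset.mem_Ico] at hx ⊢
      obtain ⟨⟨hip, hjn⟩, hij, hzz⟩ := hx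
      have hbi := permword_getD_bounds hz (show i < z.length from by omega)
      have hbj := permword_getD_bounds hz (show j < z.length from by omega)
      have hii : z.idxOf (z.getD i 0) = i := permword_indexOf_getD hz (by omega)
      have hjj : z.idxOf (z.getD j 0) = j := permword_indexOf_getD hz hjn.2
      refine ⟨⟨by omega, by omega⟩, by omega, ?_, ?_⟩
      · rw [invWord_getD (by omega), show z.getD j 0 - 1 + 1 = z.getD j 0 from by omega, hjj]
        omega
      · rw [invWord_getD (by omega), show z.getD i 0 - 1 + 1 = z.getD i 0 from by omega, hii]
        omega
    case hj =>
      rintro ⟨s, t⟩ hx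
      simp only [Finset.mem_filter, Finset.mem_product, Finset.mem_range, Finset.mem_Ico] at hx ⊢
      obtain ⟨⟨hsn, htn⟩, hst, hps, hpt⟩ := hx
      rw [invWord_getD hsn] at hps
      rw [invWord_getD htn] at hpt
      have hsmem : s + 1 ∈ z := (permword_mem_iff hz).mpr ⟨by omega, by omega⟩
      have htmem : t + 1 ∈ z := (permword_mem_iff hz).mpr ⟨by omega, by omega⟩
      have hsv : z.getD (z.idxOf (s+1)) 0 = s + 1 := permword_getD_indexOf hsmem
      have htv : z.getD (z.idxOf (t+1)) 0 = t + 1 := permword_getD_indexOf htmem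
      have hslt : z.idxOf (s+1) < z.length := permword_indexOf_lt hz hsmem
      refine ⟨⟨by omega, by omega, by omega⟩, by omega, ?_⟩
      rw [hsv, htv]
      omega
    case left =>
      rintro ⟨i, j⟩ hx
      simp only [Finset.mem_filter, Finset.mem_product, Finset.mem_range, Finset.mem_Ico] at hx
      obtain ⟨⟨hip, hjn⟩, hij, hzz⟩ := hx
      have hbi := permword_getD_bounds hz (show i < z.length from by omega)
      have hbj := permword_getD_bounds hz (show j < z.length from by omega)
      have hii : z.idxOf (z.getD i 0) = i := permword_indexOf_getD hz (by omega)
      have hjj : z.idxOf (z.getD j 0) = j := permword_indexOf_getD hz hjn.2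
      show (z.idxOf (z.getD i 0 - 1 + 1), z.idxOf (z.getD j 0 - 1 + 1)) = (i, j)
      rw [show z.getD i 0 - 1 + 1 = z.getD i 0 from by omega,
        show z.getD j 0 - 1 + 1 = z.getD j 0 from by omega, hii, hjj]
    case right =>
      rintro ⟨s, t⟩ hx
      simp only [Finset.mem_filter, Finset.mem_product, Finset.mem_range] at hx
      obtain ⟨⟨hsn, htn⟩, hst, hps, hpt⟩ := hx
      have hsmem : s + 1 ∈ z := (permword_mem_iff hz).mpr ⟨by omega, by omega⟩
      have htmem : t + 1 ∈ z := (permword_mem_iff hz).mpr ⟨by omega, by omega⟩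
      have hsv : z.getD (z.idxOf (s+1)) 0 = s + 1 := permword_getD_indexOf hsmem
      have htv : z.getD (z.idxOf (t+1)) 0 = t + 1 := permword_getD_indexOf htmem
      show (z.getD (z.idxOf (s+1)) 0 - 1, z.getD (z.idxOf (t+1)) 0 - 1) = (s, t)
      rw [hsv, htv]
      simp
  rw [hS11, hS21, hS22, hS12]
  omega


lemma st_conditions_take {z : List ℕ} (hz : isPermWord z) {p : ℕ} (hp : p ≤ z.length) :
    isPermWord ((invWord z).filter (fun e => e ≤ p)) ∧
    stWord (z.take p) = invWord ((invWord z).filter (fun e => e ≤ p)) := by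
  have h := slice_lemma hz 0 p (by omega)
  have hfe : (invWord z).filter (fun e => decide (0 < e ∧ e ≤ 0 + p))
      = (invWord z).filter (fun e => decide (e ≤ p)) := by
    apply List.filter_congr
    intro e he
    have := invWord_mem_ge he
    rw [decide_eq_decide]
    omega
  have hmapid : ((invWord z).filter (fun e => decide (e ≤ p))).map (fun e => e - 0)
      = (invWord z).filter (fun e => decide (e ≤ p)) := by simp
  rw [hfe, hmapid, List.drop_zero] at h
  exact ⟨h.1, h.2.symm⟩

lemma st_conditions_drop {z : List ℕ} (hz : isPermWord z) {p : ℕ} (hp : p ≤ z.length) :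
    isPermWord (((invWord z).filter (fun e => p < e)).map (fun e => e - p)) ∧
    stWord (z.drop p) = invWord (((invWord z).filter (fun e => p < e)).map (fun e => e - p)) := by
  have h := slice_lemma hz p (z.length - p) (by omega)
  have hfe : (invWord z).filter (fun e => decide (p < e ∧ e ≤ p + (z.length - p)))
      = (invWord z).filter (fun e => decide (p < e)) := by
    apply List.filter_congr
    intro e he
    have h1 := invWord_mem_ge he
    have h2 := invWord_mem_le hz he
    rw [decide_eq_decide]
    omega
  have htake : (z.drop p).take (z.length - p) = z.drop p := by
    rw [show z.length - p = (z.drop p).length from by rw [List.length_drop]]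
    exact List.take_length
  rw [hfe, htake] at h
  exact ⟨h.1, h.2.symm⟩

end ThetaAux

variable {R : Type*} [CommRing R]

/-- The Malvenuto–Reutenauer product `w * w' = Σ u v`, summed over all words `u, v` with
`alph(u) ∪ alph(v) = [p+q]`, `st(u) = w` and `st(v) = w'`; equivalently the sum of all
permutation words `z` of `[p+q]` with `st(z₁⋯z_p) = w` and `st(z_{p+1}⋯z_{p+q}) = w'`. -/
noncomputable def mulMR (w w' : List ℕ) : List ℕ →₀ R :=
  (((permsOf (w.length + w'.length)).filter (fun z =>
      stWord (z.take w.length) = w ∧ stWord (z.drop w.length) = w')).map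
    (fun z => Finsupp.single z (1 : R))).sum

/-- Hoffman's `q`-shuffle of words: each interleaving is weighted by `q` to the number
of crossings. -/
noncomputable def qshuf (q : R) : List ℕ → List ℕ → (List ℕ →₀ R)
  | [], v => Finsupp.single v 1
  | u, [] => Finsupp.single u 1
  | a :: u, b :: v =>
      Finsupp.mapDomain (a :: ·) (qshuf q u (b :: v))
      + q ^ (u.length + 1) • Finsupp.mapDomain (b :: ·) (qshuf q (a :: u) v)
  termination_by u v => u.length + v.length

/-- The `q`-shifted-shuffle product `w *'_q w' = w ⧢_q \bar{w'}`, where `\bar{w'}`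
shifts all letters of `w'` by `|w|`. -/
noncomputable def shiftShufQ (q : R) (w w' : List ℕ) : List ℕ →₀ R :=
  qshuf q w (w'.map (· + w.length))

namespace ThetaAux

lemma qshuf_nil_left (q : R) (v : List ℕ) : qshuf q [] v = Finsupp.single v 1 := by
  rw [qshuf]

lemma qshuf_cons_nil (q : R) (a : ℕ) (u : List ℕ) :
    qshuf q (a :: u) [] = Finsupp.single (a :: u) 1 := by
  rw [qshuf]
  simp

lemma qshuf_cons_cons (q : R) (a b : ℕ) (u v : List ℕ) :
    qshuf q (a :: u) (b :: v) =
      Finsupp.mapDomain (a :: ·) (qshuf q u (b :: v))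
      + q ^ (u.length + 1) • Finsupp.mapDomain (b :: ·) (qshuf q (a :: u) v) := by
  rw [qshuf]

end ThetaAux

namespace ThetaAux

lemma mapDomain_cons_apply (a : ℕ) (F : List ℕ →₀ R) (t : List ℕ) :
    Finsupp.mapDomain (a :: ·) F (a :: t) = F t :=
  Finsupp.mapDomain_apply (fun s t h => by injection h) F t

lemma mapDomain_cons_apply_ne (a : ℕ) (F : List ℕ →₀ R) {y : List ℕ}
    (hy : ∀ t, y ≠ a :: t) : Finsupp.mapDomain (a :: ·) F y = 0 :=
  Finsupp.mapDomain_notin_range _ _ (by rintro ⟨t, ht⟩; exact hy t ht.symm)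

lemma qshuf_apply_nil (q : R) (p : ℕ) (v : List ℕ) (hv : ∀ x ∈ v, p < x) (y : List ℕ) :
    (qshuf q [] v) y =
      if y.filter (fun c => c ≤ p) = [] ∧ y.filter (fun c => p < c) = v
      then q ^ crossNum p y else 0 := by
  rw [qshuf_nil_left, Finsupp.single_apply]
  by_cases h1 : y.filter (fun c => decide (c ≤ p)) = []
  · have hall : ∀ c ∈ y, p < c := by
      intro c hcmem
      have := List.filter_eq_nil_iff.mp h1 c hcmem
      simp at this
      omega
    have h2 : y.filter (fun c => decide (p < c)) = y :=
      List.filter_eq_self.mpr (fun c hcmem => by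
        have := hall c hcmem
        simp
        omega)
    by_cases h3 : y = v
    · rw [if_pos (show v = y from h3.symm),
        if_pos (show _ ∧ _ from ⟨h1, by rw [h2, h3]⟩),
        crossNum_of_all_gt hall, pow_zero]
    · rw [if_neg (show ¬ (v = y) from fun hh => h3 hh.symm),
        if_neg (show ¬ _ from by rintro ⟨hh1, hh2⟩; exact h3 (by rw [← h2, hh2]))]
  · have hnv : ¬ (v = y) := by
      intro hh
      apply h1
      apply List.filter_eq_nil_iff.mpr
      intro c hcmem
      have := hv c (by rw [hh]; exact hcmem)
      simp
      omega
    rw [if_neg hnv, if_neg (show ¬ _ from fun hh => h1 hh.1)]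

lemma qshuf_apply_nil_right (q : R) (p : ℕ) (a : ℕ) (u : List ℕ)
    (hu : ∀ x ∈ a :: u, x ≤ p) (y : List ℕ) :
    (qshuf q (a :: u) []) y =
      if y.filter (fun c => c ≤ p) = a :: u ∧ y.filter (fun c => p < c) = []
      then q ^ crossNum p y else 0 := by
  rw [qshuf_cons_nil, Finsupp.single_apply]
  by_cases h2 : y.filter (fun c => decide (p < c)) = []
  · have hall : ∀ c ∈ y, c ≤ p := by
      intro c hcmem
      have := List.filter_eq_nil_iff.mp h2 c hcmem
      simp at this
      omega
    have h1y : y.filter (fun c => decide (c ≤ p)) = y :=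
      List.filter_eq_self.mpr (fun c hcmem => by
        have := hall c hcmem
        simp
        omega)
    by_cases h3 : y = a :: u
    · rw [if_pos (show a :: u = y from h3.symm),
        if_pos (show _ ∧ _ from ⟨by rw [h1y, h3], h2⟩),
        crossNum_of_all_le hall, pow_zero]
    · rw [if_neg (show ¬ (a :: u = y) from fun hh => h3 hh.symm),
        if_neg (show ¬ _ from by rintro ⟨hh1, _⟩; exact h3 (by rw [← h1y, hh1]))]
  · have hna : ¬ (a :: u = y) := by
      intro hh
      apply h2
      apply List.filter_eq_nil_iff.mpr
      intro c hcmem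
      have := hu c (by rw [hh]; exact hcmem)
      simp
      omega
    rw [if_neg hna, if_neg (show ¬ _ from fun hh => h2 hh.2)]

lemma qshuf_apply (q : R) (p : ℕ) :
    ∀ (N : ℕ) (u v : List ℕ), u.length + v.length ≤ N →
      (∀ x ∈ u, x ≤ p) → (∀ x ∈ v, p < x) → ∀ y : List ℕ,
      (qshuf q u v) y =
        if y.filter (fun c => c ≤ p) = u ∧ y.filter (fun c => p < c) = v
        then q ^ crossNum p y else 0 := by
  intro N
  induction N with
  | zero =>
      intro u v hN hu hv y
      match u, v with
      | [], v => exact qshuf_apply_nil q p v hv y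
      | a :: u', v => simp [List.length_cons] at hN
  | succ N ih =>
      intro u v hN hu hv y
      match u, v with
      | [], v => exact qshuf_apply_nil q p v hv y
      | a :: u', [] => exact qshuf_apply_nil_right q p a u' hu y
      | a :: u', b :: v' =>
        rw [qshuf_cons_cons, Finsupp.add_apply, Finsupp.smul_apply]
        have hap : a ≤ p := hu a (by simp)
        have hbp : p < b := hv b (by simp)
        match y with
        | [] =>
            rw [mapDomain_cons_apply_ne _ _ (by simp), mapDomain_cons_apply_ne _ _ (by simp)]
            rw [if_neg (by rintro ⟨h1, h2⟩; simp at h1)]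
            simp
        | c :: t =>
            by_cases hcp : c ≤ p
            · have h2z : Finsupp.mapDomain (b :: ·) (qshuf q (a :: u') v') (c :: t) = 0 := by
                apply mapDomain_cons_apply_ne
                intro t' ht'
                have : c = b := by injection ht'
                omega
              rw [h2z, smul_zero, add_zero]
              have hf1 : (c :: t).filter (fun x => decide (x ≤ p))
                  = c :: t.filter (fun x => decide (x ≤ p)) := by
                simp [List.filter_cons, hcp]
              have hf2 : (c :: t).filter (fun x => decide (p < x))
                  = t.filter (fun x => decide (p < x)) := by
                simp [List.filter_cons, show ¬ p < c from by omega]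
              rw [hf1, hf2, crossNum_cons, if_pos hcp, zero_add]
              by_cases hca : c = a
              · subst hca
                rw [mapDomain_cons_apply,
                  ih u' (b :: v') (by simp at hN ⊢; omega)
                    (fun x hx => hu x (by simp [hx])) hv t]
                simp only [List.cons.injEq, true_and]
              · rw [mapDomain_cons_apply_ne _ _
                  (fun t' ht' => hca (by injection ht'))]
                rw [if_neg (by rintro ⟨h1, h2⟩; exact hca (by injection h1))]
            · have h1z : Finsupp.mapDomain (a :: ·) (qshuf q u' (b :: v')) (c :: t) = 0 := by
                apply mapDomain_cons_apply_ne
                intro t' ht'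
                have : c = a := by injection ht'
                omega
              rw [h1z, zero_add]
              have hf1 : (c :: t).filter (fun x => decide (x ≤ p))
                  = t.filter (fun x => decide (x ≤ p)) := by
                simp [List.filter_cons, hcp]
              have hf2 : (c :: t).filter (fun x => decide (p < x))
                  = c :: t.filter (fun x => decide (p < x)) := by
                simp [List.filter_cons, show p < c from by omega]
              rw [hf1, hf2, crossNum_cons, if_neg hcp]
              by_cases hcb : c = b
              · subst hcb
                rw [mapDomain_cons_apply,
                  ih (a :: u') v' (by simp at hN ⊢; omega) hu
                    (fun x hx => hv x (by simp [hx])) t]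
                by_cases hcond : t.filter (fun x => decide (x ≤ p)) = a :: u'
                    ∧ t.filter (fun x => decide (p < x)) = v'
                · rw [if_pos hcond, if_pos ⟨hcond.1, by rw [hcond.2]⟩]
                  have hlen : (t.filter (fun x => decide (x ≤ p))).length = u'.length + 1 := by
                    rw [hcond.1]; simp
                  rw [smul_eq_mul, ← pow_add, hlen]
                · rw [if_neg hcond, smul_zero, if_neg]
                  rintro ⟨h1, h2⟩
                  exact hcond ⟨h1, by injection h2⟩
              · rw [mapDomain_cons_apply_ne _ _
                  (fun t' ht' => hcb (by injection ht'))]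
                rw [smul_zero, if_neg (by rintro ⟨h1, h2⟩; exact hcb (by injection h2))]

lemma finsupp_sum_map_single (v : List ℕ → (List ℕ →₀ R)) :
    ∀ L : List (List ℕ),
      ((L.map (fun z => Finsupp.single z (1 : R))).sum).sum (fun z c => c • v z)
        = (L.map v).sum := by
  intro L
  induction L with
  | nil => simp
  | cons z t ih =>
      rw [List.map_cons, List.sum_cons, List.map_cons, List.sum_cons,
        Finsupp.sum_add_index' (fun a => by simp) (fun a c1 c2 => add_smul c1 c2 (v a)),
        ih, Finsupp.sum_single_index (by simp), one_smul]

lemma finsupp_list_sum_apply (L : List (List ℕ →₀ R)) (y : List ℕ) :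
    (L.sum) y = (L.map (fun μ => μ y)).sum :=
  map_list_sum (Finsupp.applyAddHom y) L


lemma map_sum_eq_single {α M : Type*} [AddCommMonoid M] [DecidableEq α]
    (L : List α) (hL : L.Nodup) (F : α → M) (a : α) (ha : a ∈ L)
    (h0 : ∀ b ∈ L, b ≠ a → F b = 0) : (L.map F).sum = F a := by
  have hperm := List.perm_cons_erase ha
  rw [List.Perm.sum_eq (hperm.map F), List.map_cons, List.sum_cons, List.sum_eq_zero, add_zero]
  intro x hx
  simp only [List.mem_map] at hx
  obtain ⟨z, hz, rfl⟩ := hx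
  exact h0 z ((hL.mem_erase_iff).mp hz).2 ((hL.mem_erase_iff).mp hz).1

end ThetaAux

open ThetaAux in
/-- The map `θ_q(w) = q^{ℓ(w)} w⁻¹` satisfies `θ_q(w * w') = θ_q(w) *'_q θ_q(w')`
for all permutations `w, w'` (extending `θ_q` linearly to the MR product). -/
theorem thetaq_hom (q : R) (hq : IsUnit q) (w w' : List ℕ)
    (hw : isPermWord w) (hw' : isPermWord w') :
    ((mulMR (R := R) w w').sum fun z c =>
        c • (q ^ invCount z • Finsupp.single (invWord z) (1 : R))) =
      (q ^ invCount w * q ^ invCount w') • shiftShufQ q (invWord w) (invWord w') := by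
  classical
  rw [mulMR, ThetaAux.finsupp_sum_map_single
    (fun z => q ^ invCount z • Finsupp.single (invWord z) (1 : R))]
  have hLstnodup : ((permsOf (w.length + w'.length)).filter
      (fun z => decide (stWord (z.take w.length) = w ∧ stWord (z.drop w.length) = w'))).Nodup :=
    (List.nodup_permutations _ ((List.nodup_range (n := w.length + w'.length)).map
      (fun a b hab => by omega))).filter _
  have hmem : ∀ z : List ℕ,
      z ∈ (permsOf (w.length + w'.length)).filter
        (fun z => decide (stWord (z.take w.length) = w ∧ stWord (z.drop w.length) = w'))
      ↔ (isPermWord z ∧ z.length = w.length + w'.length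
          ∧ stWord (z.take w.length) = w ∧ stWord (z.drop w.length) = w') := by
    intro z
    rw [List.mem_filter, permsOf, List.mem_permutations]
    constructor
    · rintro ⟨hperm, hcond⟩
      simp only [decide_eq_true_eq] at hcond
      have hlen : z.length = w.length + w'.length := by simpa using hperm.length_eq
      exact ⟨by rw [isPermWord, hlen]; exact hperm, hlen, hcond.1, hcond.2⟩
    · rintro ⟨hpw, hlen, h1, h2⟩
      rw [isPermWord, hlen] at hpw
      exact ⟨hpw, by simp [h1, h2]⟩
  apply Finsupp.ext
  intro y
  rw [finsupp_list_sum_apply, List.map_map]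
  rw [shiftShufQ, invWord_length, Finsupp.smul_apply, smul_eq_mul]
  rw [qshuf_apply q w.length ((w.length + w'.length) + (w.length + w'.length))
    (invWord w) ((invWord w').map (· + w.length))
    (by rw [invWord_length, List.length_map, invWord_length]; omega)
    (fun x hx => invWord_mem_le hw hx)
    (by
      intro x hx
      simp only [List.mem_map] at hx
      obtain ⟨e, he, rfl⟩ := hx
      have := invWord_mem_ge he
      omega) y]
  by_cases hCy : y.filter (fun c => decide (c ≤ w.length)) = invWord w
      ∧ y.filter (fun c => decide (w.length < c)) = (invWord w').map (· + w.length)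
  · rw [if_pos hCy]
    obtain ⟨hcy1, hcy2⟩ := hCy
    have hAperm : isPermWord (invWord w) := invWord_isPerm hw
    have hbperm : List.Perm (y.filter (fun c => decide (c ≤ w.length))
        ++ y.filter (fun c => decide (w.length < c))) y := by
      have h0 := List.filter_append_perm (fun c => decide (c ≤ w.length)) y
      have he : y.filter (fun c => !decide (c ≤ w.length))
          = y.filter (fun c => decide (w.length < c)) := by
        apply List.filter_congr
        intro c _
        by_cases h : c ≤ w.length
        · simp [h, show ¬ w.length < c from by omega]
        · simp [h, show w.length < c from by omega]
      rw [he] at h0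
      exact h0
    rw [hcy1, hcy2] at hbperm
    have hynodup : y.Nodup := by
      apply (hbperm.nodup_iff).mp
      rw [List.nodup_append]
      refine ⟨permword_nodup hAperm,
        (permword_nodup (invWord_isPerm hw')).map (fun x y1 hxy => by omega), ?_⟩
      intro x hx1 b hx2 hxb
      have h1 := invWord_mem_le hw hx1
      simp only [List.mem_map] at hx2
      obtain ⟨e, he, heq⟩ := hx2
      have := invWord_mem_ge he
      omega
    have hylen : y.length = w.length + w'.length := by
      have := hbperm.length_eq
      simp only [List.length_append, List.length_map, invWord_length] at this
      omega
    have hyperm : isPermWord y := by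
      apply isPermWord_of hynodup
      intro m hm
      rw [hylen]
      rcases List.mem_append.mp ((hbperm.mem_iff).mpr hm) with h | h
      · have h1 := invWord_mem_ge h
        have h2 := invWord_mem_le hw h
        omega
      · simp only [List.mem_map] at h
        obtain ⟨e, he, rfl⟩ := h
        have h1 := invWord_mem_ge he
        have h2 := invWord_mem_le hw' he
        omega
    have hz0perm : isPermWord (invWord y) := invWord_isPerm hyperm
    have hz0len : (invWord y).length = w.length + w'.length := by
      rw [invWord_length, hylen]
    have hyz0 : invWord (invWord y) = y := invWord_invWord hyperm
    have hst1 : stWord ((invWord y).take w.length) = w := by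
      have h := st_conditions_take hz0perm (p := w.length) (by omega)
      rw [h.2, hyz0, hcy1, invWord_invWord hw]
    have hst2 : stWord ((invWord y).drop w.length) = w' := by
      have h := st_conditions_drop hz0perm (p := w.length) (by omega)
      rw [h.2, hyz0, hcy2, List.map_map]
      have hcomp : ((fun e => e - w.length) ∘ (fun e : ℕ => e + w.length)) = id :=
        funext fun e => by simp
      rw [hcomp, List.map_id, invWord_invWord hw']
    have hz0mem := (hmem (invWord y)).mpr ⟨hz0perm, hz0len, hst1, hst2⟩
    refine Eq.trans (map_sum_eq_single _ hLstnodup _ _ hz0mem ?_) ?_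
    · intro z hzmem hzne
      have hzperm : isPermWord z := ((hmem z).mp hzmem).1
      have hne : invWord z ≠ y := fun hh => hzne (by rw [← hh, invWord_invWord hzperm])
      simp [Function.comp, Finsupp.smul_apply, Finsupp.single_apply, hne]
    · have hsplit := invCount_split hz0perm (p := w.length) (by omega)
      rw [hyz0] at hsplit
      have htake : invCount ((invWord y).take w.length) = invCount w := by
        conv_rhs => rw [← hst1]
        rw [invCount_stWord ((List.take_sublist _ _).nodup (permword_nodup hz0perm))]
      have hdrop : invCount ((invWord y).drop w.length) = invCount w' := by
        conv_rhs => rw [← hst2]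
        rw [invCount_stWord ((List.drop_sublist _ _).nodup (permword_nodup hz0perm))]
      simp only [Function.comp_apply, Finsupp.smul_apply, hyz0, Finsupp.single_apply,
        smul_eq_mul, eq_self_iff_true, if_true, mul_one]
      rw [hsplit, htake, hdrop, pow_add, pow_add]
  · rw [if_neg hCy, mul_zero]
    apply List.sum_eq_zero
    intro x hx
    simp only [List.mem_map] at hx
    obtain ⟨z, hz, rfl⟩ := hx
    obtain ⟨hzperm, hzlen, hst1, hst2⟩ := (hmem z).mp hz
    have hne : invWord z ≠ y := by
      intro hh
      apply hCy
      have h1 := st_conditions_take hzperm (p := w.length) (by omega)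
      have h2 := st_conditions_drop hzperm (p := w.length) (by omega)
      constructor
      · have h3 : invWord ((invWord z).filter (fun e => e ≤ w.length)) = w := by
          rw [← h1.2, hst1]
        have h4 : (invWord z).filter (fun e => decide (e ≤ w.length)) = invWord w := by
          conv_lhs => rw [← invWord_invWord h1.1]
          rw [h3]
        rw [← hh]
        exact h4
      · have h3 : invWord (((invWord z).filter
            (fun e => w.length < e)).map (fun e => e - w.length)) = w' := by
          rw [← h2.2, hst2]
        have h5 : ((invWord z).filter
            (fun e => decide (w.length < e))).map (fun e => e - w.length) = invWord w' := by
          conv_lhs => rw [← invWord_invWord h2.1]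
          rw [h3]
        rw [← hh, ← h5, List.map_map]
        have h6 : (((invWord z).filter (fun e => decide (w.length < e))).map
            ((fun e => e + w.length) ∘ (fun e => e - w.length)))
            = (invWord z).filter (fun e => decide (w.length < e)) := by
          conv_rhs => rw [← List.map_id ((invWord z).filter (fun e => decide (w.length < e)))]
          apply List.map_congr_left
          intro e he
          have := List.mem_filter.mp he
          simp at this ⊢
          omega
        exact h6.symm
    simp [Function.comp, Finsupp.smul_apply, Finsupp.single_apply, hne]
end

section
/- For standard Young tableaux: if T is in SYT(λ) then the length of the row word of its standardization satisfies ℓ(w(st(T))) = Σ_{i<j} λ_i λ_j − inv(T); hence sign(T) := (−1)^{ℓ(w(st(T)))} equals sign(T_λ)·(−1)^{inv(T)}, where T_λ is the unique standard tableau of shape λ with inv(T_λ) = 0. -/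
/-- The inversion number of a tableau:
`inv(T) = #{((i,j),(i',j')) : i < i', T(i,j) ≥ T(i',j')}`. -/
def invT (T : List (List ℕ)) : ℕ :=
  ∑ i ∈ Finset.range T.length, ∑ i' ∈ Finset.range T.length,
    if i < i' then
      ((T.getD i []).map (fun a => ((T.getD i' []).filter (fun b => b ≤ a)).length)).sum
    else 0

/-- The inversion number of a tableau with respect to columns:
`inv^c(T) = #{((i,j),(i',j')) : j < j', T(i,j) > T(i',j')}`. -/
def invcT (T : List (List ℕ)) : ℕ :=
  ∑ i ∈ Finset.range T.length, ∑ i' ∈ Finset.range T.length,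
    ∑ j ∈ Finset.range (T.getD i []).length, ∑ j' ∈ Finset.range (T.getD i' []).length,
      if j < j' ∧ (T.getD i' []).getD j' 0 < (T.getD i []).getD j 0 then 1 else 0

/-- `NE(λ)`: the number of strictly southwest–northeast pairs of boxes of `λ`,
`#{((i,j),(i',j')) ∈ λ×λ : i > i', j < j'}`. -/
def NEshape (s : List ℕ) : ℕ :=
  ∑ i ∈ Finset.range s.length, ∑ i' ∈ Finset.range s.length,
    ∑ j ∈ Finset.range (s.getD i 0), ∑ j' ∈ Finset.range (s.getD i' 0),
      if i' < i ∧ j < j' then 1 else 0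

/-- The shape of a tableau: the list of row lengths. -/
def shape (T : List (List ℕ)) : List ℕ := T.map List.length

/-- `T` is a semistandard Young tableau: nonempty rows of weakly decreasing lengths
(partition shape), positive entries weakly increasing along rows and strictly
increasing down columns. -/
def isSSYT (T : List (List ℕ)) : Prop :=
  (∀ r ∈ T, r ≠ []) ∧
  (∀ i, i + 1 < T.length → (T.getD (i + 1) []).length ≤ (T.getD i []).length) ∧
  (∀ i j, j + 1 < (T.getD i []).length →
    (T.getD i []).getD j 0 ≤ (T.getD i []).getD (j + 1) 0) ∧
  (∀ i j, i + 1 < T.length → j < (T.getD (i + 1) []).length →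
    (T.getD i []).getD j 0 < (T.getD (i + 1) []).getD j 0) ∧
  (∀ r ∈ T, ∀ a ∈ r, 0 < a)

/-- The standardization `st(T)` of a semistandard tableau: renumber the boxes in
the order of their values, ties broken by column, left to right. -/
def stTab (T : List (List ℕ)) : List (List ℕ) :=
  T.map (fun row => row.mapIdx (fun j a =>
    1 + ∑ i' ∈ Finset.range T.length,
      ((T.getD i' []).zipIdx.filter (fun p => p.1 < a ∨ (p.1 = a ∧ p.2 < j))).length))

/-- The row word `w(T)` of a tableau: entries read left-to-right,
bottom row to top row. -/
def rowWord (T : List (List ℕ)) : List ℕ := T.reverse.flatten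

/-- The entries of `T` are exactly `1, …, n`: `T` is standard. -/
def standardEntries (T : List (List ℕ)) : Prop :=
  T.flatten.Perm ((List.range T.flatten.length).map (· + 1))

/-- The superstandard tableau `T_λ`: row `i` is filled with the consecutive numbers
`λ₁+⋯+λ_{i-1}+1, …, λ₁+⋯+λ_i`; it is the unique standard tableau of shape `λ` with
`inv(T_λ) = 0`. -/
def Tlam (s : List ℕ) : List (List ℕ) :=
  (List.range s.length).map (fun i =>
    (List.range (s.getD i 0)).map (fun j => (s.take i).sum + j + 1))


-- ite-sum = filter length
lemma sum_ite_filter (p : ℕ → Prop) [DecidablePred p] (l : List ℕ) :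
    (l.map (fun a => if p a then 1 else 0)).sum = (l.filter (fun b => decide (p b))).length := by
  induction l with
  | nil => simp
  | cons a l ih =>
    simp only [List.map_cons, List.sum_cons, List.filter_cons, ih]
    by_cases h : p a <;> simp [h] <;> omega

lemma sum_range_getD {α : Type*} (L : List α) (d : α) (f : α → ℕ) :
    ∑ i ∈ Finset.range L.length, f (L.getD i d) = (L.map f).sum := by
  induction L with
  | nil => simp
  | cons a L ih =>
    rw [List.length_cons, Finset.sum_range_succ']
    simp only [List.getD_cons_succ, List.getD_cons_zero, ih, List.map_cons, List.sum_cons]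
    ring

-- recursive inversion count
def inv2 : List ℕ → ℕ
  | [] => 0
  | a :: l => (l.filter (fun b => b < a)).length + inv2 l

lemma sum_ite_getD (p : ℕ → Prop) [DecidablePred p] (l : List ℕ) :
    (∑ k ∈ Finset.range l.length, if p (l.getD k 0) then 1 else 0)
      = (l.filter (fun b => decide (p b))).length := by
  rw [sum_range_getD l 0 (fun x => if p x then 1 else 0), sum_ite_filter]

lemma invCount_eq_inv2 (w : List ℕ) : invCount w = inv2 w := by
  induction w with
  | nil => simp [invCount, inv2]
  | cons a l ih =>
    rw [invCount, Finset.card_filter, Finset.sum_product] at *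
    rw [List.length_cons, Finset.sum_range_succ']
    have h0 : (∑ p2 ∈ Finset.range (l.length + 1),
        if 0 < p2 ∧ (a :: l).getD p2 0 < (a :: l).getD 0 0 then 1 else 0)
        = (l.filter (fun b => b < a)).length := by
      rw [Finset.sum_range_succ']
      simp only [List.getD_cons_succ, List.getD_cons_zero, Nat.succ_pos, true_and,
        Nat.lt_irrefl, false_and, if_false, add_zero]
      exact sum_ite_getD (fun b => b < a) l
    have h1 : ∀ p1, (∑ p2 ∈ Finset.range (l.length + 1),
        if p1 + 1 < p2 ∧ (a :: l).getD p2 0 < (a :: l).getD (p1+1) 0 then 1 else 0)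
        = ∑ p2 ∈ Finset.range l.length,
          if p1 < p2 ∧ l.getD p2 0 < l.getD p1 0 then 1 else 0 := by
      intro p1
      rw [Finset.sum_range_succ']
      simp only [List.getD_cons_succ, List.getD_cons_zero, Nat.add_lt_add_iff_right,
        Nat.not_lt_zero, false_and, if_false, add_zero]
    simp only [h1, h0]
    rw [inv2, ← ih]
    ring
lemma inv2_append (u v : List ℕ) :
    inv2 (u ++ v) = inv2 u + inv2 v + (u.map (fun a => (v.filter (fun b => b < a)).length)).sum := by
  induction u with
  | nil => simp [inv2]
  | cons a u ih =>
    rw [List.cons_append, inv2, inv2, ih, List.filter_append, List.length_append,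
      List.map_cons, List.sum_cons]
    ring

lemma inv2_sorted {l : List ℕ} (h : l.Pairwise (· ≤ ·)) : inv2 l = 0 := by
  induction l with
  | nil => rfl
  | cons a l ih =>
    rw [List.pairwise_cons] at h
    rw [inv2, ih h.2, add_zero, List.length_eq_zero_iff, List.filter_eq_nil_iff]
    intro b hb
    simpa using h.1 b hb

lemma sum_map_add' (f g : ℕ → ℕ) (l : List ℕ) :
    (l.map (fun x => f x + g x)).sum = (l.map f).sum + (l.map g).sum := by
  induction l with
  | nil => simp
  | cons a l ih => simp [ih]; ring

lemma pairCount (R r : List ℕ) :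
    (r.map (fun a => (R.filter (fun b => b < a)).length)).sum
      + (R.map (fun a => (r.filter (fun b => b ≤ a)).length)).sum = R.length * r.length := by
  induction r with
  | nil => simp
  | cons y r ih =>
    simp only [List.map_cons, List.sum_cons, List.filter_cons]
    have h1 : ∀ a : ℕ, (if (decide (y ≤ a)) = true then y :: r.filter (fun b => decide (b ≤ a))
        else r.filter (fun b => decide (b ≤ a))).length
        = (if y ≤ a then 1 else 0) + (r.filter (fun b => decide (b ≤ a))).length := by
      intro a; by_cases h : y ≤ a
      · simp [h]; omega
      · simp [h]
    simp only [h1]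
    rw [sum_map_add' (fun a => if y ≤ a then 1 else 0)
      (fun a => (r.filter (fun b => decide (b ≤ a))).length) R, sum_ite_filter (fun a => y ≤ a) R]
    have h2 : (R.filter (fun b => decide (b < y))).length
        + (R.filter (fun a => decide (y ≤ a))).length = R.length := by
      rw [← List.countP_eq_length_filter, ← List.countP_eq_length_filter]
      rw [List.length_eq_countP_add_countP (fun b => decide (b < y))]
      congr 1
      apply List.countP_congr
      intro x _
      simp
    rw [List.length_cons, Nat.mul_succ, ← ih]
    omega
lemma double_sum_succ (n : ℕ) (F : ℕ → ℕ → ℕ) :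
    (∑ i ∈ Finset.range (n+1), ∑ j ∈ Finset.range (n+1), F i j)
    = (∑ i ∈ Finset.range n, ∑ j ∈ Finset.range n, F (i+1) (j+1))
      + (∑ j ∈ Finset.range n, F 0 (j+1)) + (∑ i ∈ Finset.range n, F (i+1) 0) + F 0 0 := by
  rw [Finset.sum_range_succ' (fun i => ∑ j ∈ Finset.range (n+1), F i j) n]
  rw [Finset.sum_range_succ' (fun j => F 0 j) n]
  have h : ∀ i, (∑ j ∈ Finset.range (n+1), F (i+1) j)
      = (∑ j ∈ Finset.range n, F (i+1) (j+1)) + F (i+1) 0 := fun i =>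
    Finset.sum_range_succ' (fun j => F (i+1) j) n
  simp only [h]
  rw [Finset.sum_add_distrib]
  ring

lemma sum_map_flatten (L : List (List ℕ)) (f : ℕ → ℕ) :
    ((L.flatten).map f).sum = (L.map (fun r => (r.map f).sum)).sum := by
  rw [List.map_flatten, List.sum_flatten, List.map_map]
  rfl

lemma key_count (T : List (List ℕ)) (h : ∀ r ∈ T, r.Pairwise (· ≤ ·)) :
    inv2 (rowWord T) + invT T =
      ∑ i ∈ Finset.range T.length, ∑ j ∈ Finset.range T.length,
        if i < j then (T.getD i []).length * (T.getD j []).length else 0 := by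
  induction T with
  | nil => simp [rowWord, invT, inv2]
  | cons R rest ih =>
    have hR : R.Pairwise (· ≤ ·) := h R List.mem_cons_self
    have hrest := ih (fun r hr => h r (List.mem_cons_of_mem _ hr))
    have hrow : rowWord (R :: rest) = rowWord rest ++ R := by
      simp [rowWord]
    -- cross term
    have hcross : ((rowWord rest).map (fun a => (R.filter (fun b => b < a)).length)).sum
        = ∑ i' ∈ Finset.range rest.length,
            ((rest.getD i' []).map (fun a => (R.filter (fun b => b < a)).length)).sum := by
      rw [rowWord, sum_map_flatten, List.map_reverse, List.sum_reverse]
      exact (sum_range_getD rest ([] : List ℕ) _).symm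
    -- invT decomposition
    have hinvT : invT (R :: rest) = (∑ i' ∈ Finset.range rest.length,
        (R.map (fun a => ((rest.getD i' []).filter (fun b => b ≤ a)).length)).sum) + invT rest := by
      rw [invT, List.length_cons, double_sum_succ]
      simp only [List.getD_cons_succ, List.getD_cons_zero, Nat.add_lt_add_iff_right,
        Nat.succ_pos, Nat.not_lt_zero, Nat.lt_irrefl, if_true, if_false,
        Finset.sum_const_zero, add_zero]
      rw [invT]
      ring
    -- RHS decomposition
    have hrhs : (∑ i ∈ Finset.range (R :: rest).length, ∑ j ∈ Finset.range (R :: rest).length,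
          if i < j then ((R :: rest).getD i []).length * ((R :: rest).getD j []).length else 0)
        = (∑ i ∈ Finset.range rest.length, ∑ j ∈ Finset.range rest.length,
            if i < j then (rest.getD i []).length * (rest.getD j []).length else 0)
          + ∑ j ∈ Finset.range rest.length, R.length * (rest.getD j []).length := by
      rw [List.length_cons, double_sum_succ]
      simp only [List.getD_cons_succ, List.getD_cons_zero, Nat.add_lt_add_iff_right,
        Nat.succ_pos, Nat.not_lt_zero, Nat.lt_irrefl, if_true, if_false,
        Finset.sum_const_zero, add_zero]
    rw [hrow, inv2_append, inv2_sorted hR, hcross, hinvT, hrhs, ← hrest]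
    have : (∑ i' ∈ Finset.range rest.length,
          ((rest.getD i' []).map (fun a => (R.filter (fun b => b < a)).length)).sum)
        + (∑ i' ∈ Finset.range rest.length,
          (R.map (fun a => ((rest.getD i' []).filter (fun b => b ≤ a)).length)).sum)
        = ∑ j ∈ Finset.range rest.length, R.length * (rest.getD j []).length := by
      rw [← Finset.sum_add_distrib]
      exact Finset.sum_congr rfl (fun i _ => pairCount R (rest.getD i []))
    omega
lemma countP_or_split {α : Type*} (p q : α → Prop) [DecidablePred p] [DecidablePred q]
    (l : List α) (h : ∀ x ∈ l, ¬(p x ∧ q x)) :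
    l.countP (fun x => decide (p x ∨ q x))
      = l.countP (fun x => decide (p x)) + l.countP (fun x => decide (q x)) := by
  induction l with
  | nil => simp
  | cons a l ih =>
    rw [List.countP_cons, List.countP_cons, List.countP_cons,
      ih (fun x hx => h x (List.mem_cons_of_mem _ hx))]
    have hna := h a List.mem_cons_self
    rcases Decidable.em (p a) with hp | hp
    · have hq : ¬ q a := fun hq => hna ⟨hp, hq⟩
      simp [hp, hq]
      omega
    · by_cases hq : q a <;> simp [hp, hq] <;> omega
    
lemma countP_lt_range (m n : ℕ) :
    (List.range n).countP (fun k => decide (k < m)) = min m n := by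
  induction n with
  | zero => simp
  | succ n ih =>
    rw [List.range_succ, List.countP_append, ih]
    simp only [List.countP_cons, List.countP_nil]
    by_cases h : n < m <;> simp [h] <;> omega

lemma countP_snd_enum (r : List ℕ) (q : ℕ → Bool) :
    r.zipIdx.countP (fun p => q p.1) = r.countP q := by
  conv_rhs => rw [← List.zipIdx_map_fst 0 r]
  rw [List.countP_map]
  rfl

lemma stTab_eq_self (T : List (List ℕ)) (hstd : standardEntries T) : stTab T = T := by
  have hperm : T.flatten.Perm ((List.range T.flatten.length).map (· + 1)) := hstd
  set n := T.flatten.length with hn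
  have hnodup : T.flatten.Nodup := by
    refine hperm.nodup_iff.mpr ?_
    exact (List.nodup_range (n := n)).map (add_left_injective 1)
  obtain ⟨hrows, hdisj⟩ := List.nodup_flatten.mp hnodup
  apply List.ext_getElem (by simp [stTab])
  intro i hi0 hi
  simp only [stTab, List.getElem_map]
  apply List.ext_getElem (by simp)
  intro j hj0 hj
  rw [List.getElem_mapIdx]
  have hamem_row : T[i][j] ∈ T[i] := List.getElem_mem _
  have hamem : T[i][j] ∈ T.flatten := List.mem_flatten.mpr ⟨T[i], List.getElem_mem _, hamem_row⟩
  set a := T[i][j] with ha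
  have haval : 1 ≤ a ∧ a ≤ n := by
    have := hperm.subset hamem
    simp only [List.mem_map, List.mem_range] at this
    obtain ⟨k, hk, hk2⟩ := this
    have hk2' : k + 1 = a := hk2
    omega
  have hterm : ∀ i', i' < T.length →
      ((T.getD i' []).zipIdx.filter (fun p => decide (p.1 < a ∨ (p.1 = a ∧ p.2 < j)))).length
        = (T.getD i' []).countP (fun b => decide (b < a)) := by
    intro i' hi'
    rw [← List.countP_eq_length_filter,
      countP_or_split (fun p : ℕ × ℕ => p.1 < a) (fun p : ℕ × ℕ => p.1 = a ∧ p.2 < j) _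
        (by rintro x hx ⟨h1, h2, _⟩; omega)]
    have h2 : (T.getD i' []).zipIdx.countP (fun p => decide (p.1 = a ∧ p.2 < j)) = 0 := by
      rw [List.countP_eq_zero]
      rintro ⟨b, k⟩ hmem hb
      simp only [decide_eq_true_eq] at hb
      obtain ⟨hb1, hb2⟩ := hb
      subst hb1
      rw [List.mk_mem_zipIdx_iff_getElem?, List.getD_eq_getElem T [] hi'] at hmem
      obtain ⟨hklen, hkval⟩ := List.getElem?_eq_some_iff.mp hmem
      by_cases hii : i' = i
      · subst hii
        have hnod := hrows T[i'] (List.getElem_mem _)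
        have : k = j := (List.Nodup.getElem_inj_iff hnod).mp (by rw [hkval, ha])
        omega
      · have hmem1 : a ∈ T[i'] := hkval ▸ List.getElem_mem hklen
        rcases Nat.lt_or_ge i' i with hlt | hge
        · exact (List.pairwise_iff_getElem.mp hdisj) i' i hi' hi hlt hmem1 hamem_row
        · have hlt : i < i' := by omega
          exact (List.pairwise_iff_getElem.mp hdisj) i i' hi hi' hlt hamem_row hmem1
    rw [h2, add_zero]
    exact countP_snd_enum (T.getD i' []) (fun b => decide (b < a))
  have hsum : (∑ i' ∈ Finset.range T.length,
      ((T.getD i' []).zipIdx.filter (fun p => decide (p.1 < a ∨ (p.1 = a ∧ p.2 < j)))).length)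
      = a - 1 := by
    rw [Finset.sum_congr rfl (fun i' hi' => hterm i' (Finset.mem_range.mp hi'))]
    rw [sum_range_getD T ([] : List ℕ) (fun r => r.countP (fun b => decide (b < a)))]
    have : (T.map (fun r => r.countP (fun b => decide (b < a)))).sum
        = T.flatten.countP (fun b => decide (b < a)) :=
      (List.countP_flatten (l := T)).symm
    rw [this, hperm.countP_eq, List.countP_map]
    have : ((List.range n).countP ((fun b => decide (b < a)) ∘ (· + 1)))
        = (List.range n).countP (fun k => decide (k < a - 1)) := by
      apply List.countP_congr
      intro x _
      show decide (x + 1 < a) = true ↔ decide (x < a - 1) = true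
      simp only [decide_eq_true_eq]
      omega
    rw [this, countP_lt_range]
    omega
  rw [hsum]
  omega
lemma Tlam_cons (a : ℕ) (s : List ℕ) :
    Tlam (a :: s) = ((List.range a).map (· + 1)) :: (Tlam s).map (List.map (· + a)) := by
  rw [Tlam, List.length_cons, List.range_succ_eq_map, List.map_cons]
  congr 1
  · simp
  · rw [Tlam, List.map_map, List.map_map]
    apply List.map_congr_left
    intro i _
    simp only [Function.comp_apply, List.getD_cons_succ, List.take_succ_cons, List.sum_cons,
      List.map_map]
    apply List.map_congr_left
    intro j _
    simp only [Function.comp_apply]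
    omega

lemma flatten_Tlam (s : List ℕ) : (Tlam s).flatten = (List.range s.sum).map (· + 1) := by
  induction s with
  | nil => simp [Tlam]
  | cons a s ih =>
    rw [Tlam_cons, List.flatten_cons, ← List.map_flatten, ih, List.sum_cons, List.range_add,
      List.map_append, List.map_map, List.map_map]
    congr 1
    apply List.map_congr_left
    intro k _
    simp only [Function.comp_apply]
    omega

lemma standardEntries_Tlam (s : List ℕ) : standardEntries (Tlam s) := by
  rw [standardEntries, flatten_Tlam]
  simp

lemma shape_Tlam (s : List ℕ) : shape (Tlam s) = s := by
  rw [shape, Tlam, List.map_map]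
  apply List.ext_getElem (by simp)
  intro i h1 h2
  simp only [List.length_map, List.length_range] at h1
  simp [List.getElem?_eq_getElem h2]

lemma Tlam_getElem (s : List ℕ) (i : ℕ) (hi : i < (Tlam s).length) :
    (Tlam s)[i] = (List.range (s.getD i 0)).map (fun j => (s.take i).sum + j + 1) := by
  simp [Tlam]

lemma Tlam_length (s : List ℕ) : (Tlam s).length = s.length := by simp [Tlam]

lemma Tlam_sorted (s : List ℕ) : ∀ r ∈ Tlam s, r.Pairwise (· ≤ ·) := by
  intro r hr
  rw [Tlam, List.mem_map] at hr
  obtain ⟨i, _, rfl⟩ := hr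
  rw [List.pairwise_map]
  exact List.pairwise_lt_range.imp (fun h => by omega)

lemma sum_take_mono (s : List ℕ) {i i' : ℕ} (h : i ≤ i') : (s.take i).sum ≤ (s.take i').sum := by
  conv_rhs => rw [← List.take_append_drop i (s.take i')]
  rw [List.take_take, min_eq_left h, List.sum_append]
  omega

lemma invT_Tlam (s : List ℕ) : invT (Tlam s) = 0 := by
  rw [invT]
  apply Finset.sum_eq_zero
  intro i hi
  apply Finset.sum_eq_zero
  intro i' hi'
  rw [Finset.mem_range] at hi hi'
  by_cases h : i < i'
  · rw [if_pos h]
    rw [List.getD_eq_getElem _ [] hi, List.getD_eq_getElem _ [] hi', Tlam_getElem _ _ hi,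
      Tlam_getElem _ _ hi']
    apply List.sum_eq_zero
    intro x hx
    rw [List.map_map, List.mem_map] at hx
    obtain ⟨j, hj, rfl⟩ := hx
    rw [List.mem_range] at hj
    simp only [Function.comp_apply, List.length_eq_zero_iff]
    rw [List.filter_eq_nil_iff]
    intro b hb
    rw [List.mem_map] at hb
    obtain ⟨j', hj', rfl⟩ := hb
    have hilen : i < s.length := by rw [Tlam_length] at hi; exact hi
    have h1 : (s.take (i+1)).sum = (s.take i).sum + s[i] := List.sum_take_succ s i hilen
    have h2 : (s.take (i+1)).sum ≤ (s.take i').sum := sum_take_mono s h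
    have h3 : j < s[i] := by rwa [List.getD_eq_getElem s 0 hilen] at hj
    simp only [decide_eq_true_eq]
    omega
  · rw [if_neg h]

lemma rows_sorted_of_isSSYT (T : List (List ℕ)) (hT : isSSYT T) :
    ∀ r ∈ T, r.Pairwise (· ≤ ·) := by
  intro r hr
  obtain ⟨i, hi, rfl⟩ := List.getElem_of_mem hr
  have hrow := hT.2.2.1 i
  rw [← List.isChain_iff_pairwise]
  rw [List.isChain_iff_getElem]
  intro k hk
  have hk1 : k + 1 < (T.getD i []).length := by
    rw [List.getD_eq_getElem _ [] hi]; omega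
  have := hrow k hk1
  rw [List.getD_eq_getElem _ [] hi] at this
  rw [List.getD_eq_getElem _ 0 (by omega), List.getD_eq_getElem _ 0 (by omega)] at this
  simpa [List.get_eq_getElem] using this

theorem length_rowWord_st' (T : List (List ℕ)) (hT : isSSYT T)
    (hstd : standardEntries T) :
    invCount (rowWord (stTab T)) + invT T =
      (∑ i ∈ Finset.range (shape T).length, ∑ j ∈ Finset.range (shape T).length,
        if i < j then (shape T).getD i 0 * (shape T).getD j 0 else 0) ∧
    ((-1 : ℤ) ^ invCount (rowWord (stTab T)) =
      (-1 : ℤ) ^ invCount (rowWord (stTab (Tlam (shape T)))) * (-1 : ℤ) ^ invT T) := by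
  set s := shape T with hs
  set N := (∑ i ∈ Finset.range s.length, ∑ j ∈ Finset.range s.length,
        if i < j then s.getD i 0 * s.getD j 0 else 0) with hN
  have hslen : s.length = T.length := by simp [hs, shape]
  have hsgetD : ∀ i, i < T.length → s.getD i 0 = (T.getD i []).length := by
    intro i hi
    rw [hs, shape, List.getD_eq_getElem _ 0 (by simpa [shape]), List.getElem_map,
      List.getD_eq_getElem _ [] hi]
  have hA : invCount (rowWord (stTab T)) + invT T = N := by
    rw [stTab_eq_self T hstd, invCount_eq_inv2, key_count T (rows_sorted_of_isSSYT T hT), hN,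
      hslen]
    apply Finset.sum_congr rfl
    intro i hi
    apply Finset.sum_congr rfl
    intro j hj
    rw [Finset.mem_range] at hi hj
    rw [hsgetD i hi, hsgetD j hj]
  have hB : invCount (rowWord (stTab (Tlam s))) = N := by
    rw [stTab_eq_self _ (standardEntries_Tlam s), invCount_eq_inv2]
    have := key_count (Tlam s) (Tlam_sorted s)
    rw [invT_Tlam, add_zero] at this
    rw [this, hN, Tlam_length]
    apply Finset.sum_congr rfl
    intro i hi
    apply Finset.sum_congr rfl
    intro j hj
    rw [Finset.mem_range] at hi hj
    have h1 : ((Tlam s).getD i []).length = s.getD i 0 := by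
      rw [List.getD_eq_getElem _ [] (by rwa [Tlam_length]), Tlam_getElem _ _ (by rwa [Tlam_length])]
      simp
    have h2 : ((Tlam s).getD j []).length = s.getD j 0 := by
      rw [List.getD_eq_getElem _ [] (by rwa [Tlam_length]), Tlam_getElem _ _ (by rwa [Tlam_length])]
      simp
    rw [h1, h2]
  refine ⟨hA, ?_⟩
  rw [hB]
  calc ((-1 : ℤ)) ^ invCount (rowWord (stTab T))
      = (-1 : ℤ) ^ invCount (rowWord (stTab T)) * ((-1 : ℤ) ^ invT T * (-1 : ℤ) ^ invT T) := by
        rw [← pow_add, Even.neg_one_pow ⟨invT T, rfl⟩, mul_one]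
    _ = (-1 : ℤ) ^ (invCount (rowWord (stTab T)) + invT T) * (-1 : ℤ) ^ invT T := by
        rw [pow_add]; ring
    _ = (-1 : ℤ) ^ N * (-1 : ℤ) ^ invT T := by rw [hA]


/-- For `T ∈ SYT(λ)`: `ℓ(w(st(T))) = Σ_{i<j} λ_i λ_j − inv(T)` (stated additively),
hence `sign(T) := (−1)^{ℓ(w(st(T)))}` equals `sign(T_λ) · (−1)^{inv(T)}`. -/
theorem length_rowWord_st (T : List (List ℕ)) (hT : isSSYT T)
    (hstd : standardEntries T) :
    invCount (rowWord (stTab T)) + invT T =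
      (∑ i ∈ Finset.range (shape T).length, ∑ j ∈ Finset.range (shape T).length,
        if i < j then (shape T).getD i 0 * (shape T).getD j 0 else 0) ∧
    ((-1 : ℤ) ^ invCount (rowWord (stTab T)) =
      (-1 : ℤ) ^ invCount (rowWord (stTab (Tlam (shape T)))) * (-1 : ℤ) ^ invT T) := by
  exact length_rowWord_st' T hT hstd
end

section
/- Row-shape shuffle lemma, part (1): for fixed p + q = n, the map sending a split of [n] into {i₁<...<i_p} and {j₁<...<j_q} to the tableau product (row tableau with entries i₁,...,i_p) · (row tableau with entries j₁,...,j_q) (Schensted insertion of j₁,...,j_q into the first row) is injective into standard Young tableaux with at most two rows. -/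
/-- Schensted row insertion of `x` into a row. -/
def rowInsert (r : List ℕ) (x : ℕ) : List ℕ × Option ℕ :=
  match r.findIdx? (fun a => x < a) with
  | none => (r ++ [x], none)
  | some i => (r.set i x, some (r.getD i 0))

/-- Schensted insertion of `x` into a tableau. -/
def insertTab : List (List ℕ) → ℕ → List (List ℕ)
  | [], x => [[x]]
  | r :: rest, x =>
    match rowInsert r x with
    | (r', none) => r' :: rest
    | (r', some y) => r' :: insertTab rest y

/-- The insertion tableau `P(w)` of a word. In particular, for a split
`([n] = {i₁<…<i_p} ⊔ {j₁<…<j_q})`, `P(i₁⋯i_p j₁⋯j_q)` is the dot product of the two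
row tableaux, obtained by Schensted insertion of `j₁,…,j_q` into the row `i₁⋯i_p`. -/
def Pword (w : List ℕ) : List (List ℕ) := w.foldl insertTab []

/-- Simplified two-row insertion. -/
def ins2 (p : List ℕ × List ℕ) (x : ℕ) : List ℕ × List ℕ :=
  match p.1.findIdx? (fun a => x < a) with
  | none => (p.1 ++ [x], p.2)
  | some i => (p.1.set i x, p.2 ++ [p.1.getD i 0])

lemma ins2_none {r s : List ℕ} {x : ℕ} (h : r.findIdx? (fun a => decide (x < a)) = none) :
    ins2 (r, s) x = (r ++ [x], s) := by
  simp only [ins2, h]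

lemma ins2_some {r s : List ℕ} {x : ℕ} {i : ℕ}
    (h : r.findIdx? (fun a => decide (x < a)) = some i) :
    ins2 (r, s) x = (r.set i x, s ++ [r.getD i 0]) := by
  simp only [ins2, h]

lemma rowInsert_none {r : List ℕ} {x : ℕ} (h : r.findIdx? (fun a => decide (x < a)) = none) :
    rowInsert r x = (r ++ [x], none) := by
  simp only [rowInsert, h]

lemma rowInsert_some {r : List ℕ} {x : ℕ} {i : ℕ}
    (h : r.findIdx? (fun a => decide (x < a)) = some i) :
    rowInsert r x = (r.set i x, some (r.getD i 0)) := by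
  simp only [rowInsert, h]

lemma findIdx_none_iff {r : List ℕ} {x : ℕ} :
    r.findIdx? (fun a => decide (x < a)) = none ↔ ∀ a ∈ r, ¬ x < a := by
  simp [List.findIdx?_eq_none_iff]

lemma findIdx_some_facts {r : List ℕ} {x i : ℕ}
    (h : r.findIdx? (fun a => decide (x < a)) = some i) :
    ∃ hi : i < r.length, x < r[i] ∧ ∀ j (hj : j < i), ¬ x < (r[j]'(by omega)) := by
  rw [List.findIdx?_eq_some_iff_getElem] at h
  obtain ⟨hi, h1, h2⟩ := h
  exact ⟨hi, by simpa using h1, fun j hj => by simpa using h2 j hj⟩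

lemma getD_of_lt {r : List ℕ} {i : ℕ} (hi : i < r.length) : r.getD i 0 = r[i] := by
  simp [List.getD_eq_getElem?_getD, List.getElem?_eq_getElem hi]

/-- append-only regime -/
lemma foldl_ins2_app : ∀ (v r s : List ℕ), v.Pairwise (· < ·) →
    (∀ x ∈ v, ∀ a ∈ r, ¬ x < a) →
    List.foldl ins2 (r, s) v = (r ++ v, s) := by
  intro v
  induction v with
  | nil => intro r s _ _; simp
  | cons x v ih =>
    intro r s hs hle
    rw [List.pairwise_cons] at hs
    have hnone : r.findIdx? (fun a => decide (x < a)) = none :=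
      findIdx_none_iff.mpr (hle x (by simp))
    rw [List.foldl_cons, ins2_none hnone, ih (r ++ [x]) s hs.2]
    · simp
    · intro y hy a ha
      rcases List.mem_append.mp ha with ha | ha
      · exact hle y (by simp [hy]) a ha
      · simp only [List.mem_singleton] at ha; subst ha
        exact fun hlt => absurd (hs.1 y hy) (by omega)

/-- first row length only grows -/
lemma foldl_ins2_len : ∀ (v r s : List ℕ),
    r.length ≤ (List.foldl ins2 (r, s) v).1.length := by
  intro v
  induction v with
  | nil => intro r s; simp
  | cons x v ih =>
    intro r s
    rw [List.foldl_cons]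
    rcases h : r.findIdx? (fun a => decide (x < a)) with _ | i
    · rw [ins2_none h]
      have := ih (r ++ [x]) s
      simp at this ⊢; omega
    · rw [ins2_some h]
      have := ih (r.set i x) (s ++ [r.getD i 0])
      simpa using this

/-- entries stay bounded -/
lemma foldl_ins2_lt (N : ℕ) : ∀ (v r s : List ℕ),
    (∀ a ∈ r, a < N) → (∀ a ∈ s, a < N) → (∀ x ∈ v, x < N) →
    (∀ a ∈ (List.foldl ins2 (r, s) v).1, a < N) ∧
    (∀ a ∈ (List.foldl ins2 (r, s) v).2, a < N) := by
  intro v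
  induction v with
  | nil => intro r s hr hs _; exact ⟨hr, hs⟩
  | cons x v ih =>
    intro r s hr hs hv
    have hx : x < N := hv x (by simp)
    rw [List.foldl_cons]
    rcases h : r.findIdx? (fun a => decide (x < a)) with _ | i
    · rw [ins2_none h]
      refine ih _ _ ?_ hs (fun y hy => hv y (by simp [hy]))
      intro a ha
      rcases List.mem_append.mp ha with ha | ha
      · exact hr a ha
      · simp only [List.mem_singleton] at ha; omega
    · rw [ins2_some h]
      obtain ⟨hi, -, -⟩ := findIdx_some_facts h
      refine ih _ _ ?_ ?_ (fun y hy => hv y (by simp [hy]))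
      · intro a ha
        rcases List.mem_or_eq_of_mem_set ha with ha | ha
        · exact hr a ha
        · omega
      · intro a ha
        rcases List.mem_append.mp ha with ha | ha
        · exact hs a ha
        · simp only [List.mem_singleton] at ha; subst ha
          rw [getD_of_lt hi]
          exact hr _ (List.getElem_mem hi)

/-- Dichotomy: inserting a word of letters `< n` into a row ending with `n`:
either `n` is never bumped (and then every letter bumps, so row 1 keeps its length),
or `n` is bumped to the end of row 2. -/
lemma foldl_ins2_max (n : ℕ) : ∀ (v r s : List ℕ), v.Pairwise (· < ·) →
    (∀ x ∈ v, x < n) →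
    (List.foldl ins2 (r ++ [n], s) v =
        ((List.foldl ins2 (r, s) v).1 ++ [n], (List.foldl ins2 (r, s) v).2) ∧
      (List.foldl ins2 (r, s) v).1.length = r.length) ∨
    List.foldl ins2 (r ++ [n], s) v =
        ((List.foldl ins2 (r, s) v).1, (List.foldl ins2 (r, s) v).2 ++ [n]) := by
  intro v
  induction v with
  | nil => intro r s _ _; exact Or.inl ⟨rfl, rfl⟩
  | cons x v ih =>
    intro r s hs hv
    rw [List.pairwise_cons] at hs
    have hx : x < n := hv x (by simp)
    rw [List.foldl_cons, List.foldl_cons]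
    rcases h : r.findIdx? (fun a => decide (x < a)) with _ | i
    · -- x appends in r, bumps n in r ++ [n]
      have h2 : (r ++ [n]).findIdx? (fun a => decide (x < a)) = some r.length := by
        rw [List.findIdx?_append, h]
        simp [hx]
      rw [ins2_none h, ins2_some h2]
      have hset : (r ++ [n]).set r.length x = r ++ [x] := by
        rw [List.set_append_right _ _ (le_refl _)]
        simp
      have hgetD : (r ++ [n]).getD r.length 0 = n := by
        rw [getD_of_lt (by simp)]
        simp
      rw [hset, hgetD]
      right
      have happ : ∀ (t : List ℕ), List.foldl ins2 (r ++ [x], t) v = (r ++ [x] ++ v, t) := by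
        intro t
        refine foldl_ins2_app v _ t hs.2 ?_
        intro y hy a ha
        have hxy : x < y := hs.1 y hy
        rcases List.mem_append.mp ha with ha | ha
        · have := findIdx_none_iff.mp h a ha
          omega
        · simp only [List.mem_singleton] at ha; omega
      rw [happ, happ]
    · -- x bumps the same entry in both rows
      obtain ⟨hi, -, -⟩ := findIdx_some_facts h
      have h2 : (r ++ [n]).findIdx? (fun a => decide (x < a)) = some i := by
        rw [List.findIdx?_append, h]; rfl
      rw [ins2_some h, ins2_some h2,
        List.set_append_left _ _ hi,
        show (r ++ [n]).getD i 0 = r.getD i 0 by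
          rw [getD_of_lt hi, getD_of_lt (by simp; omega), List.getElem_append_left hi]]
      rcases ih (r.set i x) (s ++ [r.getD i 0]) hs.2 (fun y hy => hv y (by simp [hy])) with
        ⟨heq, hlen⟩ | heq
      · exact Or.inl ⟨heq, by simpa using hlen⟩
      · exact Or.inr heq

/-- A two-row tableau, dropping the second row if empty. -/
def T2 (r s : List ℕ) : List (List ℕ) := if s = [] then [r] else [r, s]

lemma T2_inj {r s r' s' : List ℕ} (h : T2 r s = T2 r' s') : r = r' ∧ s = s' := by
  unfold T2 at h
  split_ifs at h with h1 h2 h2 <;> simp_all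

/-- Bridge: on our words, `insertTab` coincides with the simplified `ins2`. -/
lemma bridge : ∀ (v r s : List ℕ), v.Pairwise (· < ·) → r.Pairwise (· < ·) →
    (∀ x ∈ v, x ∉ r) →
    (∀ a ∈ r, ∀ x ∈ v, x < a → ∀ y ∈ s, y < a) →
    List.foldl insertTab (T2 r s) v =
      T2 (List.foldl ins2 (r, s) v).1 (List.foldl ins2 (r, s) v).2 := by
  intro v
  induction v with
  | nil => intro r s _ _ _ _; rfl
  | cons x v ih =>
    intro r s hv hr hnm hJ
    rw [List.pairwise_cons] at hv
    rw [List.foldl_cons, List.foldl_cons]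
    rcases h : r.findIdx? (fun a => decide (x < a)) with _ | i
    · -- append
      have hrw : insertTab (T2 r s) x = T2 (r ++ [x]) s := by
        unfold T2
        split_ifs with h1
        · show insertTab [r] x = _
          simp [insertTab, rowInsert_none h]
        · show insertTab [r, s] x = _
          simp [insertTab, rowInsert_none h]
      rw [hrw, ins2_none h]
      refine ih (r ++ [x]) s hv.2 ?_ ?_ ?_
      · rw [List.pairwise_append]
        refine ⟨hr, by simp, ?_⟩
        intro a ha b hb
        simp only [List.mem_singleton] at hb
        have h1 := findIdx_none_iff.mp h a ha
        have h2 : x ∉ r := hnm x (by simp)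
        have h3 : a ≠ x := fun hc => h2 (hc ▸ ha)
        omega
      · intro y hy
        have h1 : y ∉ r := hnm y (by simp [hy])
        have h2 : x < y := hv.1 y hy
        simp only [List.mem_append, List.mem_singleton]
        rintro (hc | hc)
        · exact h1 hc
        · omega
      · intro a ha y hy hya z hz
        rcases List.mem_append.mp ha with ha | ha
        · exact hJ a ha y (by simp [hy]) hya z hz
        · simp only [List.mem_singleton] at ha; subst ha
          have := hv.1 y hy; omega
    · -- bump
      obtain ⟨hi, hxlt, hfirst⟩ := findIdx_some_facts h
      have hgd : r.getD i 0 = r[i] := getD_of_lt hi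
      have hsort := List.pairwise_iff_getElem.mp hr
      -- the bumped value exceeds everything in s
      have hbig : ∀ z ∈ s, z < r[i] := by
        intro z hz
        exact hJ r[i] (List.getElem_mem hi) x (by simp) hxlt z hz
      have hrw : insertTab (T2 r s) x = T2 (r.set i x) (s ++ [r.getD i 0]) := by
        have hsnone : s.findIdx? (fun a => decide (r.getD i 0 < a)) = none := by
          refine findIdx_none_iff.mpr ?_
          intro a ha
          have := hbig a ha
          rw [hgd]; omega
        unfold T2
        split_ifs with h1 h2 h2
        · simp at h2
        · subst h1
          show insertTab [r] x = _
          simp [insertTab, rowInsert_some h]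
        · simp at h2
        · show insertTab [r, s] x = _
          simp only [insertTab, rowInsert_some h, rowInsert_none hsnone]
      rw [hrw, ins2_some h]
      -- prepare facts about r.set i x
      have hxnr : x ∉ r := hnm x (by simp)
      have hjlt : ∀ j (hj : j < i), r[j]'(by omega) < x := by
        intro j hj
        have h1 := hfirst j hj
        have h2 : (r[j]'(by omega)) ≠ x := fun hc => hxnr (hc ▸ List.getElem_mem (by omega))
        omega
      refine ih (r.set i x) (s ++ [r.getD i 0]) hv.2 ?_ ?_ ?_
      · -- sortedness of r.set i x
        refine List.pairwise_iff_getElem.mpr ?_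
        intro j k hj hk hjk
        simp only [List.length_set] at hj hk
        rw [List.getElem_set, List.getElem_set]
        split_ifs with h1 h2 h2
        · omega
        · subst h1
          rcases Nat.lt_or_ge i k with hik | hik
          · exact lt_trans hxlt (hsort i k hi hk hik)
          · omega
        · subst h2
          exact hjlt j hjk
        · exact hsort j k hj hk hjk
      · intro y hy hc
        rcases List.mem_or_eq_of_mem_set hc with hc | hc
        · exact hnm y (by simp [hy]) hc
        · subst hc; exact absurd (hv.1 y hy) (lt_irrefl _)
      · -- J preserved
        intro a ha y hy hya z hz
        obtain ⟨j, hj, hja⟩ := List.mem_iff_getElem.mp ha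
        simp only [List.length_set] at hj
        rw [List.getElem_set] at hja
        split_ifs at hja with hji
        · have h1 := hv.1 y hy
          omega
        · subst hja
          rcases List.mem_append.mp hz with hz | hz
          · exact hJ _ (List.getElem_mem hj) y (by simp [hy]) hya z hz
          · simp only [List.mem_singleton] at hz; subst hz
            rw [hgd]
            rcases Nat.lt_or_ge j i with hlt | hge
            · have := hjlt j hlt
              have := hv.1 y hy
              omega
            · exact hsort i j hi hj (by omega)

lemma sort_erase_max (A : Finset ℕ) (n : ℕ) (hn : n ∈ A) (hmax : ∀ a ∈ A, a ≤ n) :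
    A.sort (· ≤ ·) = (A.erase n).sort (· ≤ ·) ++ [n] := by
  refine (fun hp hs => List.Perm.eq_of_pairwise' (r := (· ≤ · : ℕ → ℕ → Prop)) (Finset.pairwise_sort _ _) hs hp) ?_ ?_
  · apply Multiset.coe_eq_coe.mp
    have h1 : ((A.sort (· ≤ ·) : List ℕ) : Multiset ℕ) = A.val := Finset.sort_eq _ _
    have h2 : (((A.erase n).sort (· ≤ ·) : List ℕ) : Multiset ℕ) = (A.erase n).val :=
      Finset.sort_eq _ _
    have h3 : ((((A.erase n).sort (· ≤ ·) ++ [n] : List ℕ)) : Multiset ℕ)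
        = (A.erase n).val + {n} := by
      rw [← h2]; rfl
    rw [h1, h3, Finset.erase_val]
    have := Multiset.cons_erase (Finset.mem_def.mp hn)
    rw [← this]
    rw [add_comm, Multiset.singleton_add, Multiset.erase_cons_head]
  · rw [List.pairwise_append]
    refine ⟨Finset.pairwise_sort _ _, by simp, ?_⟩
    intro a ha b hb
    simp only [List.mem_singleton] at hb; subst hb
    exact hmax a (Finset.mem_of_mem_erase (Finset.mem_sort (· ≤ ·) |>.mp ha))

lemma sort_eq_nil_iff {A : Finset ℕ} : A.sort (· ≤ ·) = [] ↔ A = ∅ := by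
  constructor
  · intro h
    ext a
    simp only [Finset.notMem_empty, iff_false]
    intro ha
    have := (Finset.mem_sort (· ≤ ·)).mpr ha
    rw [h] at this
    exact absurd this (List.not_mem_nil (a := a))
  · intro h; subst h; simp

lemma form (A B : Finset ℕ) (hd : Disjoint A B) (hne : (A ∪ B).Nonempty) :
    Pword (A.sort (· ≤ ·) ++ B.sort (· ≤ ·)) =
      T2 (List.foldl ins2 (A.sort (· ≤ ·), []) (B.sort (· ≤ ·))).1
        (List.foldl ins2 (A.sort (· ≤ ·), []) (B.sort (· ≤ ·))).2 := by
  have hAs := (Finset.sortedLT_sort A).pairwise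
  have hBs := (Finset.sortedLT_sort B).pairwise
  unfold Pword
  rcases h : A.sort (· ≤ ·) with _ | ⟨a, u⟩
  · -- A empty
    have hAe : A = ∅ := sort_eq_nil_iff.mp h
    rcases hv : B.sort (· ≤ ·) with _ | ⟨b, v⟩
    · exfalso
      have hBe : B = ∅ := sort_eq_nil_iff.mp hv
      rw [hAe, hBe] at hne
      simp at hne
    · rw [hv] at hBs
      rw [List.pairwise_cons] at hBs
      have h1 : List.foldl insertTab [] ([] ++ b :: v) = List.foldl insertTab (T2 [b] []) v := rfl
      rw [h1, bridge v [b] [] hBs.2 (by simp) ?hm ?hJ]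
      case hm =>
        intro x hx
        have := hBs.1 x hx
        simp; omega
      case hJ => intro c hc y hy hlt z hz; simp at hz
      have h2 : List.foldl ins2 ([], []) (b :: v) = List.foldl ins2 ([b], []) v := by
        rw [List.foldl_cons, ins2_none (by simp)]
        rfl
      rw [h2]
  · -- A = a :: u
    rw [h] at hAs
    rw [List.pairwise_cons] at hAs
    have h1 : List.foldl insertTab [] ((a :: u) ++ B.sort (· ≤ ·))
        = List.foldl insertTab (List.foldl insertTab (T2 [a] []) u) (B.sort (· ≤ ·)) := by
      rw [List.foldl_append]
      congr 1
    rw [h1, bridge u [a] [] hAs.2 (by simp) ?hm2 ?hJ2]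
    case hm2 =>
      intro x hx
      have := hAs.1 x hx
      simp; omega
    case hJ2 => intro c hc y hy hlt z hz; simp at hz
    have h2 : List.foldl ins2 ([a], []) u = (a :: u, []) := by
      have := foldl_ins2_app u [a] [] hAs.2 ?_
      · simpa using this
      · intro x hx c hc
        simp only [List.mem_singleton] at hc; subst hc
        have := hAs.1 x hx; omega
    rw [h2]
    have hdm : ∀ x ∈ B.sort (· ≤ ·), x ∉ a :: u := by
      intro x hx hc
      have hxB : x ∈ B := (Finset.mem_sort (· ≤ ·)).mp hx
      have hxA : x ∈ A := (Finset.mem_sort (· ≤ ·)).mp (h ▸ hc)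
      exact absurd hxA (Finset.disjoint_right.mp hd hxB)
    rw [bridge (B.sort (· ≤ ·)) (a :: u) [] hBs (h ▸ (Finset.sortedLT_sort A).pairwise) hdm
      (by intro c hc y hy hlt z hz; simp at hz)]

lemma classify (N p q : ℕ) (hN : 1 ≤ N) (A B : Finset ℕ)
    (hAB : A ∪ B = Finset.Icc 1 N) (hd : Disjoint A B)
    (hA : A.card = p) (hB : B.card = q) :
    (N ∈ A ∧ ∃ C : List ℕ × List ℕ,
        C = List.foldl ins2 ((A.erase N).sort (· ≤ ·), []) (B.sort (· ≤ ·)) ∧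
        (∀ a ∈ C.1, a < N) ∧ (∀ a ∈ C.2, a < N) ∧
        ((List.foldl ins2 (A.sort (· ≤ ·), []) (B.sort (· ≤ ·)) = (C.1 ++ [N], C.2) ∧
            (List.foldl ins2 (A.sort (· ≤ ·), []) (B.sort (· ≤ ·))).1.length = p) ∨
          List.foldl ins2 (A.sort (· ≤ ·), []) (B.sort (· ≤ ·)) = (C.1, C.2 ++ [N]))) ∨
    (N ∈ B ∧ ∃ C : List ℕ × List ℕ,
        C = List.foldl ins2 (A.sort (· ≤ ·), []) ((B.erase N).sort (· ≤ ·)) ∧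
        (∀ a ∈ C.1, a < N) ∧ (∀ a ∈ C.2, a < N) ∧
        List.foldl ins2 (A.sort (· ≤ ·), []) (B.sort (· ≤ ·)) = (C.1 ++ [N], C.2) ∧
        p + 1 ≤ (List.foldl ins2 (A.sort (· ≤ ·), []) (B.sort (· ≤ ·))).1.length) := by
  have hsubA : ∀ x ∈ A, 1 ≤ x ∧ x ≤ N := by
    intro x hx
    have : x ∈ Finset.Icc 1 N := hAB ▸ Finset.mem_union_left B hx
    exact Finset.mem_Icc.mp this
  have hsubB : ∀ x ∈ B, 1 ≤ x ∧ x ≤ N := by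
    intro x hx
    have : x ∈ Finset.Icc 1 N := hAB ▸ Finset.mem_union_right A hx
    exact Finset.mem_Icc.mp this
  have hNmem : N ∈ A ∪ B := hAB ▸ Finset.mem_Icc.mpr ⟨hN, le_refl N⟩
  rcases Finset.mem_union.mp hNmem with hNA | hNB
  · -- N ∈ A
    left
    refine ⟨hNA, _, rfl, ?_⟩
    have hBlt : ∀ x ∈ B.sort (· ≤ ·), x < N := by
      intro x hx
      have hxB := (Finset.mem_sort (· ≤ ·)).mp hx
      have h1 := (hsubB x hxB).2
      have h2 : x ≠ N := fun hc => Finset.disjoint_left.mp hd hNA (hc ▸ hxB)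
      omega
    have hAlt : ∀ x ∈ (A.erase N).sort (· ≤ ·), x < N := by
      intro x hx
      have hxA := (Finset.mem_sort (· ≤ ·)).mp hx
      have h1 := (hsubA x (Finset.mem_of_mem_erase hxA)).2
      have h2 := Finset.ne_of_mem_erase hxA
      omega
    have hbd := foldl_ins2_lt N (B.sort (· ≤ ·)) ((A.erase N).sort (· ≤ ·)) []
      hAlt (by simp) hBlt
    refine ⟨hbd.1, hbd.2, ?_⟩
    have hsplit : A.sort (· ≤ ·) = (A.erase N).sort (· ≤ ·) ++ [N] :=
      sort_erase_max A N hNA (fun a ha => (hsubA a ha).2)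
    rw [hsplit]
    have hp : 1 ≤ p := by
      rw [← hA]; exact Finset.card_pos.mpr ⟨N, hNA⟩
    have hlen : ((A.erase N).sort (· ≤ ·)).length = p - 1 := by
      rw [Finset.length_sort, Finset.card_erase_of_mem hNA, hA]
    rcases foldl_ins2_max N (B.sort (· ≤ ·)) ((A.erase N).sort (· ≤ ·)) []
        ((Finset.sortedLT_sort B).pairwise) hBlt with ⟨heq, hl⟩ | heq
    · left
      refine ⟨by rw [heq], ?_⟩
      rw [heq]
      simp only [List.length_append, List.length_singleton]
      omega
    · right
      rw [heq]
  · -- N ∈ B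
    right
    refine ⟨hNB, _, rfl, ?_⟩
    have hAlt : ∀ x ∈ A.sort (· ≤ ·), x < N := by
      intro x hx
      have hxA := (Finset.mem_sort (· ≤ ·)).mp hx
      have h1 := (hsubA x hxA).2
      have h2 : x ≠ N := fun hc => Finset.disjoint_right.mp hd hNB (hc ▸ hxA)
      omega
    have hBlt : ∀ x ∈ (B.erase N).sort (· ≤ ·), x < N := by
      intro x hx
      have hxB := (Finset.mem_sort (· ≤ ·)).mp hx
      have h1 := (hsubB x (Finset.mem_of_mem_erase hxB)).2
      have h2 := Finset.ne_of_mem_erase hxB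
      omega
    have hbd := foldl_ins2_lt N ((B.erase N).sort (· ≤ ·)) (A.sort (· ≤ ·)) []
      hAlt (by simp) hBlt
    refine ⟨hbd.1, hbd.2, ?_⟩
    have hsplit : B.sort (· ≤ ·) = (B.erase N).sort (· ≤ ·) ++ [N] :=
      sort_erase_max B N hNB (fun a ha => (hsubB a ha).2)
    rw [hsplit, List.foldl_append]
    have hnone : (List.foldl ins2 (A.sort (· ≤ ·), []) ((B.erase N).sort (· ≤ ·))).1.findIdx?
        (fun a => decide (N < a)) = none := by
      refine findIdx_none_iff.mpr ?_
      intro a ha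
      have := hbd.1 a ha
      omega
    have hstep : List.foldl ins2 (List.foldl ins2 (A.sort (· ≤ ·), []) ((B.erase N).sort (· ≤ ·)))
        [N] = ((List.foldl ins2 (A.sort (· ≤ ·), []) ((B.erase N).sort (· ≤ ·))).1 ++ [N],
          (List.foldl ins2 (A.sort (· ≤ ·), []) ((B.erase N).sort (· ≤ ·))).2) := by
      rw [List.foldl_cons, List.foldl_nil]
      rw [show (List.foldl ins2 (A.sort (· ≤ ·), []) ((B.erase N).sort (· ≤ ·)))
          = ((List.foldl ins2 (A.sort (· ≤ ·), []) ((B.erase N).sort (· ≤ ·))).1,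
             (List.foldl ins2 (A.sort (· ≤ ·), []) ((B.erase N).sort (· ≤ ·))).2) from rfl,
        ins2_none hnone]
    rw [hstep]
    refine ⟨rfl, ?_⟩
    have h1 := foldl_ins2_len ((B.erase N).sort (· ≤ ·)) (A.sort (· ≤ ·)) []
    have h2 : (A.sort (· ≤ ·)).length = p := by rw [Finset.length_sort, hA]
    simp only [List.length_append, List.length_singleton]
    omega

lemma aux : ∀ (N p q : ℕ) (A B A' B' : Finset ℕ), p + q = N →
    A ∪ B = Finset.Icc 1 N → Disjoint A B → A.card = p → B.card = q →
    A' ∪ B' = Finset.Icc 1 N → Disjoint A' B' → A'.card = p → B'.card = q →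
    List.foldl ins2 (A.sort (· ≤ ·), []) (B.sort (· ≤ ·)) =
      List.foldl ins2 (A'.sort (· ≤ ·), []) (B'.sort (· ≤ ·)) →
    A = A' ∧ B = B' := by
  intro N
  induction N with
  | zero =>
    intro p q A B A' B' hpq hAB hd hA hB hAB' hd' hA' hB' heq
    rw [show Finset.Icc 1 0 = ∅ by rfl] at hAB hAB'
    obtain ⟨h1, h2⟩ := Finset.union_eq_empty.mp hAB
    obtain ⟨h3, h4⟩ := Finset.union_eq_empty.mp hAB'
    exact ⟨h1.trans h3.symm, h2.trans h4.symm⟩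
  | succ n ih =>
    intro p q A B A' B' hpq hAB hd hA hB hAB' hd' hA' hB' heq
    set N := n + 1 with hNdef
    have hN : 1 ≤ N := Nat.le_add_left 1 n
    -- erased-union facts
    have hkeyA : ∀ (A B : Finset ℕ), A ∪ B = Finset.Icc 1 N → Disjoint A B → N ∈ A →
        A.erase N ∪ B = Finset.Icc 1 n := by
      intro A B hAB hd hNA
      have hNB : N ∉ B := Finset.disjoint_left.mp hd hNA
      have : (A ∪ B).erase N = Finset.Icc 1 n := by
        rw [hAB, Finset.Icc_erase_right, Finset.Ico_add_one_right_eq_Icc]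
      rw [Finset.erase_union_distrib, Finset.erase_eq_of_notMem hNB] at this
      exact this
    have hkeyB : ∀ (A B : Finset ℕ), A ∪ B = Finset.Icc 1 N → Disjoint A B → N ∈ B →
        A ∪ B.erase N = Finset.Icc 1 n := by
      intro A B hAB hd hNB
      have hNA : N ∉ A := Finset.disjoint_right.mp hd hNB
      have : (A ∪ B).erase N = Finset.Icc 1 n := by
        rw [hAB, Finset.Icc_erase_right, Finset.Ico_add_one_right_eq_Icc]
      rw [Finset.erase_union_distrib, Finset.erase_eq_of_notMem hNA] at this
      exact this
    rcases classify N p q hN A B hAB hd hA hB with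
      ⟨hNA, C, hC, hC1, hC2, hcase⟩ | ⟨hNB, C, hC, hC1, hC2, hFeq, hFlen⟩ <;>
      rcases classify N p q hN A' B' hAB' hd' hA' hB' with
        ⟨hNA', C', hC', hC1', hC2', hcase'⟩ | ⟨hNB', C', hC', hC1', hC2', hFeq', hFlen'⟩
    · -- both N ∈ A
      have hp : 1 ≤ p := by rw [← hA]; exact Finset.card_pos.mpr ⟨N, hNA⟩
      have hcards : (A.erase N).card = p - 1 := by rw [Finset.card_erase_of_mem hNA, hA]
      have hcards' : (A'.erase N).card = p - 1 := by rw [Finset.card_erase_of_mem hNA', hA']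
      have hCeq : C = C' := by
        rcases hcase with ⟨hF, hlen⟩ | hF <;> rcases hcase' with ⟨hF', hlen'⟩ | hF'
        · rw [heq] at hF
          rw [hF'] at hF
          obtain ⟨h1, h2⟩ := Prod.mk.injEq _ _ _ _ ▸ hF
          exact Prod.ext (List.append_cancel_right h1).symm h2.symm
        · exfalso
          rw [heq, hF'] at hF
          obtain ⟨h1, h2⟩ := Prod.mk.injEq _ _ _ _ ▸ hF
          have : N ∈ C.2 := h2 ▸ (by simp)
          exact absurd (hC2 N this) (lt_irrefl N)
        · exfalso
          rw [heq, hF'] at hF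
          obtain ⟨h1, h2⟩ := Prod.mk.injEq _ _ _ _ ▸ hF
          have : N ∈ C'.2 := h2 ▸ (by simp)
          exact absurd (hC2' N this) (lt_irrefl N)
        · rw [heq] at hF
          rw [hF'] at hF
          obtain ⟨h1, h2⟩ := Prod.mk.injEq _ _ _ _ ▸ hF
          exact Prod.ext h1.symm (List.append_cancel_right h2).symm
      have := ih (p - 1) q (A.erase N) B (A'.erase N) B' (by omega)
        (hkeyA A B hAB hd hNA) (Finset.disjoint_of_subset_left (Finset.erase_subset _ _) hd)
        hcards hB
        (hkeyA A' B' hAB' hd' hNA') (Finset.disjoint_of_subset_left (Finset.erase_subset _ _) hd')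
        hcards' hB'
        (by rw [← hC, ← hC', hCeq])
      refine ⟨?_, this.2⟩
      rw [← Finset.insert_erase hNA, ← Finset.insert_erase hNA', this.1]
    · -- N ∈ A, N ∈ B' : contradiction
      exfalso
      rcases hcase with ⟨hF, hlen⟩ | hF
      · rw [heq, hFeq'] at hlen
        simp only [List.length_append, List.length_singleton] at hlen
        have := foldl_ins2_len ((B'.erase N).sort (· ≤ ·)) (A'.sort (· ≤ ·)) []
        rw [← hC'] at this
        simp only [Finset.length_sort, hA'] at this
        omega
      · rw [heq, hFeq'] at hF
        obtain ⟨h1, h2⟩ := Prod.mk.injEq _ _ _ _ ▸ hF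
        have : N ∈ C'.2 := h2 ▸ (by simp)
        exact absurd (hC2' N this) (lt_irrefl N)
    · -- N ∈ B, N ∈ A' : contradiction
      exfalso
      rcases hcase' with ⟨hF', hlen'⟩ | hF'
      · rw [← heq, hFeq] at hlen'
        simp only [List.length_append, List.length_singleton] at hlen'
        have := foldl_ins2_len ((B.erase N).sort (· ≤ ·)) (A.sort (· ≤ ·)) []
        rw [← hC] at this
        simp only [Finset.length_sort, hA] at this
        omega
      · rw [← heq, hFeq] at hF'
        obtain ⟨h1, h2⟩ := Prod.mk.injEq _ _ _ _ ▸ hF'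
        have : N ∈ C.2 := h2 ▸ (by simp)
        exact absurd (hC2 N this) (lt_irrefl N)
    · -- both N ∈ B
      have hq : 1 ≤ q := by rw [← hB]; exact Finset.card_pos.mpr ⟨N, hNB⟩
      have hcards : (B.erase N).card = q - 1 := by rw [Finset.card_erase_of_mem hNB, hB]
      have hcards' : (B'.erase N).card = q - 1 := by rw [Finset.card_erase_of_mem hNB', hB']
      have hCeq : C = C' := by
        rw [heq, hFeq'] at hFeq
        obtain ⟨h1, h2⟩ := Prod.mk.injEq _ _ _ _ ▸ hFeq
        exact Prod.ext (List.append_cancel_right h1).symm h2.symm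
      have := ih p (q - 1) A (B.erase N) A' (B'.erase N) (by omega)
        (hkeyB A B hAB hd hNB) (Finset.disjoint_of_subset_right (Finset.erase_subset _ _) hd)
        hA hcards
        (hkeyB A' B' hAB' hd' hNB') (Finset.disjoint_of_subset_right (Finset.erase_subset _ _) hd')
        hA' hcards'
        (by rw [← hC, ← hC', hCeq])
      refine ⟨this.1, ?_⟩
      rw [← Finset.insert_erase hNB, ← Finset.insert_erase hNB', this.2]

/-- Shuffle lemma for row shapes, part (1): for fixed `p + q = n`, the map sending a
split of `[n]` into parts `{i₁<…<i_p}` and `{j₁<…<j_q}` to the tableau product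
`(i₁ ⋯ i_p) · (j₁ ⋯ j_q)` (a standard Young tableau with at most two rows) is
injective. -/
theorem row_shuffle_injective (n p q : ℕ) (hpq : p + q = n)
    (A B A' B' : Finset ℕ)
    (hAB : A ∪ B = Finset.Icc 1 n) (hdisj : Disjoint A B)
    (hA : A.card = p) (hB : B.card = q)
    (hAB' : A' ∪ B' = Finset.Icc 1 n) (hdisj' : Disjoint A' B')
    (hA' : A'.card = p) (hB' : B'.card = q)
    (heq : Pword (A.sort (· ≤ ·) ++ B.sort (· ≤ ·)) =
      Pword (A'.sort (· ≤ ·) ++ B'.sort (· ≤ ·))) :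
    A = A' ∧ B = B' := by
  rcases Nat.eq_zero_or_pos n with rfl | hn
  · rw [show Finset.Icc 1 0 = ∅ by rfl] at hAB hAB'
    obtain ⟨h1, h2⟩ := Finset.union_eq_empty.mp hAB
    obtain ⟨h3, h4⟩ := Finset.union_eq_empty.mp hAB'
    exact ⟨h1.trans h3.symm, h2.trans h4.symm⟩
  · have hne : (A ∪ B).Nonempty := by
      rw [hAB]; exact ⟨n, Finset.mem_Icc.mpr ⟨hn, le_refl n⟩⟩
    have hne' : (A' ∪ B').Nonempty := by
      rw [hAB']; exact ⟨n, Finset.mem_Icc.mpr ⟨hn, le_refl n⟩⟩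
    rw [form A B hdisj hne, form A' B' hdisj' hne'] at heq
    obtain ⟨h1, h2⟩ := T2_inj heq
    exact aux n p q A B A' B' hpq hAB hdisj hA hB hAB' hdisj' hA' hB' (Prod.ext h1 h2)
end
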